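/- arXiv:2112.15262 — 5 statements merged into one kernel-verified Lean document; each statement's English description precedes it below -/
import Mathlib

section
/- Let r ≥ 3, α₁, α₂ ∈ ℂ, and θ ∈ ℝ. Put K̃ = (1/√2)[[I, I], [I, -I]] with I = I_{2^{r-2}}, and set D₁₁ = D_1^(r-1)(α₁+α₂+θ), D₁₂ = D_1^(r-1)(-(α₁-α₂-θ)), D₂₁ = D_1^(r-1)(-(α₁-α₂+θ)), D₂₂ = D_1^(r-1)(α₁+α₂-θ). Then K̃ · [[D₁₁, D₁₂], [D₂₁, D₂₂]] · K̃ = 2 · D_2^(r)(α₂) · P_{21}^(r)(θ) · D_1^(r)(α₁). -/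
/-!
Common definitions for zeta functions associated with homogeneous cones
(following Nakashima, "Functional equations of zeta functions associated
with homogeneous cones"): the functions `c(z) = cos (π z / 2)`,
`s(z) = sin (π z / 2)`, the recursive ordering of the sign set
`I_r = {1,-1}^r`, the Hadamard matrices `J^(r)`, the gamma-matrix
`A_r(α; Θ)`, the matrices `C_r`, `S_r`, the diagonal matrices `D_j^(r)(α)`,
and the rotation matrices `P_{kj}^(r)(θ) = c(θ)·I + s(θ)·X_{kj}^(r)`.
Matrices indexed by `I_s` are identified with `2^s × 2^s` matrices via the
recursive ordering, which is encoded by `ord s : Fin (2^s) → (Fin s → ℤ)`,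
sending a position to the corresponding sign vector.
-/

noncomputable section
open Matrix Complex

namespace HomCone

/-- `c(z) = cos (π z / 2)`. -/
def cc (z : ℂ) : ℂ := Complex.cos (Real.pi * z / 2)

/-- `s(z) = sin (π z / 2)`. -/
def ss (z : ℂ) : ℂ := Complex.sin (Real.pi * z / 2)

/-- The recursive ordering of `I_r = {1,-1}^r`: `ord r i` is the `i`-th sign
vector of `I_r` (positions starting from `0`).  For `r+1`: the `i`-th element
of `I_{r+1}` is `(1, ε_i)` for `i < 2^r` and `(-1, -ε_{i-2^r})` otherwise,
where `ε_i` is the `i`-th element of `I_r`. -/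
def ord : (r : ℕ) → Fin (2 ^ r) → Fin r → ℤ
  | 0, _, j => j.elim0
  | r + 1, i, j =>
    if h : (i : ℕ) < 2 ^ r then
      (if _ : (j : ℕ) = 0 then 1
       else ord r ⟨(i : ℕ), h⟩ ⟨(j : ℕ) - 1, by have := j.isLt; omega⟩)
    else
      (if _ : (j : ℕ) = 0 then -1
       else - ord r ⟨(i : ℕ) - 2 ^ r, by
              have h1 := i.isLt
              have h2 : 2 ^ (r + 1) = 2 ^ r * 2 := pow_succ 2 r
              omega⟩ ⟨(j : ℕ) - 1, by have := j.isLt; omega⟩)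

/-- The `l`-th binary digit (`l = 1, …, m`, with `l = 1` the most significant)
of a position `i ∈ Fin (2^m)`; by convention `0` for `l` outside `1, …, m`. -/
def bitv (m : ℕ) (i : Fin (2 ^ m)) (l : ℕ) : ℕ :=
  if 1 ≤ l ∧ l ≤ m ∧ (i : ℕ).testBit (m - l) then 1 else 0

/-- The Hadamard matrix `J^(r)`, defined recursively by
`J^(0) = (1)` and `J^(r+1) = J^(1) ⊗ J^(r)`, i.e. `J^(r+1)` is the `2 × 2`
block matrix `(1/√2) [[J^(r), J^(r)], [J^(r), -J^(r)]]`. -/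
def Jmat : (r : ℕ) → Matrix (Fin (2 ^ r)) (Fin (2 ^ r)) ℂ
  | 0 => 1
  | r + 1 => fun i i' =>
    ((Real.sqrt 2 : ℂ))⁻¹ *
      (if 2 ^ r ≤ (i : ℕ) ∧ 2 ^ r ≤ (i' : ℕ) then -1 else 1) *
      Jmat r ⟨(i : ℕ) % 2 ^ r, Nat.mod_lt _ (Nat.two_pow_pos r)⟩
             ⟨(i' : ℕ) % 2 ^ r, Nat.mod_lt _ (Nat.two_pow_pos r)⟩

/-- The matrix `A_r(α; Θ)` of size `2^r`, with `(ε, δ)` entry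
`exp((π√-1/2)(Σ_i ε_i δ_i α_i + Σ_{j<k} ε_j δ_k θ_{kj}))`, rows and columns
being indexed by `I_r` via the recursive ordering; here `θ_{kj} = Θ k j`. -/
def Amat (r : ℕ) (α : Fin r → ℂ) (Θ : Fin r → Fin r → ℝ) :
    Matrix (Fin (2 ^ r)) (Fin (2 ^ r)) ℂ := fun i i' =>
  Complex.exp (Real.pi * Complex.I / 2 *
    ((∑ a : Fin r, (ord r i a : ℂ) * (ord r i' a : ℂ) * α a) +
     ∑ a : Fin r, ∑ b : Fin r,
       if a < b then (ord r i a : ℂ) * (ord r i' b : ℂ) * (Θ b a : ℂ) else 0))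

/-- The element of `I_r^0 = {ε ∈ {1,-1}^r : ε_1 = 1}` at position
`i ∈ Fin (2^(r-1))`, via the identification of `I_r^0` with `I_{r-1}`
dropping the first coordinate (with the induced ordering). -/
def sgn0 (r : ℕ) (i : Fin (2 ^ (r - 1))) (a : Fin r) : ℤ :=
  if _ : (a : ℕ) = 0 then 1
  else ord (r - 1) i ⟨(a : ℕ) - 1, by have := a.isLt; omega⟩

/-- The matrix `C_r(α; Θ)` of size `2^(r-1)`, with `(ε, δ)` entry
`c(Σ_i ε_i δ_i α_i + Σ_{j<k} ε_j δ_k θ_{kj})` for `ε, δ ∈ I_r^0`. -/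
def Cmat (r : ℕ) (α : Fin r → ℂ) (Θ : Fin r → Fin r → ℝ) :
    Matrix (Fin (2 ^ (r - 1))) (Fin (2 ^ (r - 1))) ℂ := fun i i' =>
  cc ((∑ a : Fin r, (sgn0 r i a : ℂ) * (sgn0 r i' a : ℂ) * α a) +
     ∑ a : Fin r, ∑ b : Fin r,
       if a < b then (sgn0 r i a : ℂ) * (sgn0 r i' b : ℂ) * (Θ b a : ℂ) else 0)

/-- The matrix `S_r(α; Θ)` of size `2^(r-1)`, with `(ε, δ)` entry
`s(Σ_i ε_i δ_i α_i + Σ_{j<k} ε_j δ_k θ_{kj})` for `ε, δ ∈ I_r^0`. -/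
def Smat (r : ℕ) (α : Fin r → ℂ) (Θ : Fin r → Fin r → ℝ) :
    Matrix (Fin (2 ^ (r - 1))) (Fin (2 ^ (r - 1))) ℂ := fun i i' =>
  ss ((∑ a : Fin r, (sgn0 r i a : ℂ) * (sgn0 r i' a : ℂ) * α a) +
     ∑ a : Fin r, ∑ b : Fin r,
       if a < b then (sgn0 r i a : ℂ) * (sgn0 r i' b : ℂ) * (Θ b a : ℂ) else 0)

/-- The `i`-th diagonal entry of the diagonal matrix `D_j^(r)(α)` of size
`2^(r-1)`, defined recursively:
`D_1^(r)(α) = diag(c(α)·I_{2^(r-2)}, s(α)·I_{2^(r-2)})` (for `r = 2` this is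
`diag(c(α), s(α))`), `D_2^(r)(α) = diag(D_1^(r-1)(α), D_1^(r-1)(α+1))`
(for `r = 2` this gives `D_2^(2)(α) = diag(c(α), -s(α))`), and
`D_k^(r)(α) = diag(D_{k-1}^(r-1)(α), D_{k-1}^(r-1)(α))` for `3 ≤ k ≤ r`. -/
def dEnt : (r : ℕ) → (j : ℕ) → ℂ → Fin (2 ^ (r - 1)) → ℂ
  | r, 0, _, _ => 0
  | r, 1, α, i => if (i : ℕ) < 2 ^ (r - 2) then cc α else ss α
  | r, 2, α, i =>
    if h : (i : ℕ) < 2 ^ (r - 2) then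
      dEnt (r - 1) 1 α ⟨(i : ℕ), by
        have h3 : r - 1 - 1 = r - 2 := by omega
        rw [h3]; exact h⟩
    else
      dEnt (r - 1) 1 (α + 1) ⟨(i : ℕ) - 2 ^ (r - 2), by
        have h1 := i.isLt
        have h2 : 2 ^ (r - 1) ≤ 2 * 2 ^ (r - 2) := by
          calc 2 ^ (r - 1) ≤ 2 ^ (r - 2 + 1) :=
                Nat.pow_le_pow_right (by norm_num) (by omega)
            _ = 2 * 2 ^ (r - 2) := by rw [pow_succ]; exact Nat.mul_comm _ _
        have h3 : r - 1 - 1 = r - 2 := by omega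
        rw [h3]; omega⟩
  | r, j + 3, α, i =>
    if h : (i : ℕ) < 2 ^ (r - 2) then
      dEnt (r - 1) (j + 2) α ⟨(i : ℕ), by
        have h3 : r - 1 - 1 = r - 2 := by omega
        rw [h3]; exact h⟩
    else
      dEnt (r - 1) (j + 2) α ⟨(i : ℕ) - 2 ^ (r - 2), by
        have h1 := i.isLt
        have h2 : 2 ^ (r - 1) ≤ 2 * 2 ^ (r - 2) := by
          calc 2 ^ (r - 1) ≤ 2 ^ (r - 2 + 1) :=
                Nat.pow_le_pow_right (by norm_num) (by omega)
            _ = 2 * 2 ^ (r - 2) := by rw [pow_succ]; exact Nat.mul_comm _ _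
        have h3 : r - 1 - 1 = r - 2 := by omega
        rw [h3]; omega⟩

/-- The diagonal matrix `D_j^(r)(α)` of size `2^(r-1)` (`j = 1, …, r`). -/
def Dmat (r j : ℕ) (α : ℂ) : Matrix (Fin (2 ^ (r - 1))) (Fin (2 ^ (r - 1))) ℂ :=
  Matrix.diagonal (dEnt r j α)

/-- The matrix `X_{kj}^(r) = I_{2^(j-1)} ⊗ R₂ ⊗ A₂^{⊗(k-j-1)} ⊗ I_{2^(r-k)}`
of size `2^(r-1)` (`1 ≤ j < k ≤ r`), where `R₂ = [[0,-1],[1,0]]` and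
`A₂ = [[0,1],[1,0]]`, written out entrywise via binary digits (the factors of
the Kronecker product act on the binary digits, the first factor acting on
the most significant digits): the `(i, i')` entry is nonzero iff the digits
of `i` and `i'` agree at the positions `l < j` and `l ≥ k` (the identity
factors) and disagree at the positions `j ≤ l ≤ k-1` (the factors `R₂` and
`A₂`), and the nonzero value is `-1` when the `j`-th digit of `i` is `0`,
and `1` when it is `1` (the factor `R₂`). -/
def Xmat (r j k : ℕ) : Matrix (Fin (2 ^ (r - 1))) (Fin (2 ^ (r - 1))) ℂ :=
  fun i i' =>
    if (∀ l ∈ Finset.range r, (l < j ∨ k ≤ l) → bitv (r - 1) i l = bitv (r - 1) i' l)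
        ∧ (∀ l ∈ Finset.range r, j ≤ l → l < k → bitv (r - 1) i l ≠ bitv (r - 1) i' l)
    then (if bitv (r - 1) i j = 0 then -1 else 1) else 0

/-- The orthogonal matrix `P_{kj}^(r)(θ) = c(θ)·I_{2^(r-1)} + s(θ)·X_{kj}^(r)`. -/
def Pmat (r j k : ℕ) (θ : ℝ) : Matrix (Fin (2 ^ (r - 1))) (Fin (2 ^ (r - 1))) ℂ :=
  cc θ • (1 : Matrix (Fin (2 ^ (r - 1))) (Fin (2 ^ (r - 1))) ℂ) + ss θ • Xmat r j k

lemma two_pow_pred (m : ℕ) (h : 1 ≤ m) : 2 ^ (m - 1) + 2 ^ (m - 1) = 2 ^ m := by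
  have h1 : m - 1 + 1 = m := by omega
  have h2 : 2 ^ (m - 1 + 1) = 2 ^ (m - 1) * 2 := pow_succ 2 (m - 1)
  rw [h1] at h2
  omega

/-- The identification `Fin (2^(m-1)) ⊕ Fin (2^(m-1)) ≃ Fin (2^m)` used to
regard a `2 × 2` block matrix with blocks of size `2^(m-1)` as a matrix of
size `2^m`. -/
def sumEquiv (m : ℕ) (h : 1 ≤ m) : Fin (2 ^ (m - 1)) ⊕ Fin (2 ^ (m - 1)) ≃ Fin (2 ^ m) :=
  finSumFinEquiv.trans (finCongr (two_pow_pred m h))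

/-- The matrix `K̃ = (1/√2) [[I, I], [I, -I]]` of size `2^m`, with
`I = I_{2^(m-1)}`. -/
def Ktilde (m : ℕ) (h : 1 ≤ m) : Matrix (Fin (2 ^ m)) (Fin (2 ^ m)) ℂ :=
  Matrix.reindex (sumEquiv m h) (sumEquiv m h)
    (((Real.sqrt 2 : ℂ))⁻¹ • Matrix.fromBlocks 1 1 1 (-1))

end HomCone

namespace HomCone


section Aux

lemma cc_add' (a b : ℂ) : cc (a + b) = cc a * cc b - ss a * ss b := by
  unfold cc ss
  rw [show (Real.pi : ℂ) * (a + b) / 2 = Real.pi * a / 2 + Real.pi * b / 2 by ring,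
    Complex.cos_add]

lemma ss_add' (a b : ℂ) : ss (a + b) = ss a * cc b + cc a * ss b := by
  unfold cc ss
  rw [show (Real.pi : ℂ) * (a + b) / 2 = Real.pi * a / 2 + Real.pi * b / 2 by ring,
    Complex.sin_add]

lemma cc_neg' (a : ℂ) : cc (-a) = cc a := by
  unfold cc
  rw [show (Real.pi : ℂ) * (-a) / 2 = -(Real.pi * a / 2) by ring, Complex.cos_neg]

lemma ss_neg' (a : ℂ) : ss (-a) = -ss a := by
  unfold ss
  rw [show (Real.pi : ℂ) * (-a) / 2 = -(Real.pi * a / 2) by ring, Complex.sin_neg]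

lemma cc_one' : cc 1 = 0 := by
  unfold cc
  rw [show (Real.pi : ℂ) * 1 / 2 = ((Real.pi / 2 : ℝ) : ℂ) by push_cast; ring,
    ← Complex.ofReal_cos, Real.cos_pi_div_two]
  simp

lemma ss_one' : ss 1 = 1 := by
  unfold ss
  rw [show (Real.pi : ℂ) * 1 / 2 = ((Real.pi / 2 : ℝ) : ℂ) by push_cast; ring,
    ← Complex.ofReal_sin, Real.sin_pi_div_two]
  simp

lemma sumEquiv_val_inl (m : ℕ) (h : 1 ≤ m) (a : Fin (2 ^ (m - 1))) :
    ((sumEquiv m h (Sum.inl a) : Fin (2 ^ m)) : ℕ) = (a : ℕ) := by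
  simp only [sumEquiv, Equiv.trans_apply, finCongr_apply, Fin.coe_cast]
  rw [finSumFinEquiv_apply_left]
  rfl

lemma sumEquiv_val_inr (m : ℕ) (h : 1 ≤ m) (a : Fin (2 ^ (m - 1))) :
    ((sumEquiv m h (Sum.inr a) : Fin (2 ^ m)) : ℕ) = 2 ^ (m - 1) + (a : ℕ) := by
  simp only [sumEquiv, Equiv.trans_apply, finCongr_apply, Fin.coe_cast]
  rw [finSumFinEquiv_apply_right]
  rfl


lemma bitv_def (m : ℕ) (i : Fin (2 ^ m)) (l : ℕ) :
    bitv m i l = if 1 ≤ l ∧ l ≤ m ∧ ((i : ℕ)).testBit (m - l) then 1 else 0 := rfl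

lemma bitv_inl (r : ℕ) (hr : 3 ≤ r) (h1 : 1 ≤ r - 1) (a : Fin (2 ^ (r - 1 - 1))) (l : ℕ) :
    bitv (r - 1) (sumEquiv (r - 1) h1 (Sum.inl a)) l
      = if 1 ≤ l ∧ l ≤ r - 1 ∧ ((a : ℕ)).testBit (r - 1 - l) then 1 else 0 := by
  rw [bitv_def, sumEquiv_val_inl]

lemma bitv_inr_ge2 (r : ℕ) (hr : 3 ≤ r) (h1 : 1 ≤ r - 1) (a : Fin (2 ^ (r - 1 - 1)))
    (l : ℕ) (hl : 2 ≤ l) :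
    bitv (r - 1) (sumEquiv (r - 1) h1 (Sum.inr a)) l
      = if 1 ≤ l ∧ l ≤ r - 1 ∧ ((a : ℕ)).testBit (r - 1 - l) then 1 else 0 := by
  rw [bitv_def, sumEquiv_val_inr]
  by_cases hlm : l ≤ r - 1
  · rw [Nat.testBit_two_pow_add_gt (by omega)]
  · simp [hlm]

lemma bitv_inl_one (r : ℕ) (hr : 3 ≤ r) (h1 : 1 ≤ r - 1) (a : Fin (2 ^ (r - 1 - 1))) :
    bitv (r - 1) (sumEquiv (r - 1) h1 (Sum.inl a)) 1 = 0 := by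
  rw [bitv_inl r hr h1 a 1, if_neg]
  rintro ⟨-, -, hbit⟩
  rw [Nat.testBit_lt_two_pow a.isLt] at hbit
  exact Bool.false_ne_true hbit

lemma bitv_inr_one (r : ℕ) (hr : 3 ≤ r) (h1 : 1 ≤ r - 1) (a : Fin (2 ^ (r - 1 - 1))) :
    bitv (r - 1) (sumEquiv (r - 1) h1 (Sum.inr a)) 1 = 1 := by
  rw [bitv_def, sumEquiv_val_inr, if_pos]
  refine ⟨le_rfl, h1, ?_⟩
  rw [Nat.testBit_two_pow_add_eq, Nat.testBit_lt_two_pow a.isLt]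
  rfl

/-- The first condition in `Xmat r 1 2`, for mixed-block indices, is equivalent
to equality of the small indices. -/
lemma xcond_iff (r : ℕ) (hr : 3 ≤ r) (a b : Fin (2 ^ (r - 1 - 1))) :
    (∀ l ∈ Finset.range r, 2 ≤ l →
        ((if 1 ≤ l ∧ l ≤ r - 1 ∧ ((a : ℕ)).testBit (r - 1 - l) then (1:ℕ) else 0)
          = if 1 ≤ l ∧ l ≤ r - 1 ∧ ((b : ℕ)).testBit (r - 1 - l) then 1 else 0))
      ↔ a = b := by
  constructor
  · intro h
    have hab : (a : ℕ) = (b : ℕ) := by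
      apply Nat.eq_of_testBit_eq
      intro j
      by_cases hj : j < r - 1 - 1
      · have h2 : 2 ≤ r - 1 - j := by omega
        have h3 : r - 1 - j ≤ r - 1 := by omega
        have h4 : r - 1 - (r - 1 - j) = j := by omega
        have := h (r - 1 - j) (Finset.mem_range.2 (by omega)) h2
        rw [h4] at this
        by_cases hA : ((a : ℕ)).testBit j <;> by_cases hB : ((b : ℕ)).testBit j <;>
          simp [hA, hB, show (1:ℕ) ≤ r - 1 - j by omega, h3] at this ⊢
      · have ha : (a : ℕ) < 2 ^ j :=
          lt_of_lt_of_le a.isLt (Nat.pow_le_pow_right (by norm_num) (by omega))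
        have hb : (b : ℕ) < 2 ^ j :=
          lt_of_lt_of_le b.isLt (Nat.pow_le_pow_right (by norm_num) (by omega))
        rw [Nat.testBit_lt_two_pow ha, Nat.testBit_lt_two_pow hb]
    exact Fin.ext hab
  · rintro rfl l - -
    rfl

lemma Xmat_submatrix (r : ℕ) (hr : 3 ≤ r) (h1 : 1 ≤ r - 1) :
    (Xmat r 1 2).submatrix (sumEquiv (r - 1) h1) (sumEquiv (r - 1) h1) =
      Matrix.fromBlocks 0 (-1) 1 0 := by
  ext p q
  rcases p with a | a <;> rcases q with b | b
  · -- inl inl : 0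
    show Xmat r 1 2 _ _ = (0 : Matrix _ _ ℂ) a b
    rw [Xmat, if_neg, Matrix.zero_apply]
    rintro ⟨-, h2⟩
    exact h2 1 (Finset.mem_range.2 (by omega)) le_rfl (by omega)
      (by rw [bitv_inl_one r hr h1 a, bitv_inl_one r hr h1 b])
  · -- inl inr
    show Xmat r 1 2 _ _ = (-1 : Matrix _ _ ℂ) a b
    rw [Xmat]
    by_cases hab : a = b
    · subst hab
      rw [if_pos, bitv_inl_one r hr h1 a, if_pos rfl]
      · simp [Matrix.one_apply]
      constructor
      · intro l hl hc
        rcases hc with hc | hc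
        · interval_cases l
          simp [bitv_def]
        · rw [bitv_inl r hr h1 a l, bitv_inr_ge2 r hr h1 a l hc]
      · intro l _ hge hlt
        have : l = 1 := by omega
        subst this
        rw [bitv_inl_one r hr h1 a, bitv_inr_one r hr h1 a]
        omega
    · rw [if_neg]
      · simp [Matrix.one_apply, hab]
      rintro ⟨hC1, -⟩
      apply hab
      rw [← xcond_iff r hr a b]
      intro l hl h2l
      have := hC1 l hl (Or.inr h2l)
      rwa [bitv_inl r hr h1 a l, bitv_inr_ge2 r hr h1 b l h2l] at this
  · -- inr inl
    show Xmat r 1 2 _ _ = (1 : Matrix _ _ ℂ) a b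
    rw [Xmat]
    by_cases hab : a = b
    · subst hab
      rw [if_pos, bitv_inr_one r hr h1 a, if_neg (by omega)]
      · simp [Matrix.one_apply]
      constructor
      · intro l hl hc
        rcases hc with hc | hc
        · interval_cases l
          simp [bitv_def]
        · rw [bitv_inl r hr h1 a l, bitv_inr_ge2 r hr h1 a l hc]
      · intro l _ hge hlt
        have : l = 1 := by omega
        subst this
        rw [bitv_inl_one r hr h1 a, bitv_inr_one r hr h1 a]
        omega
    · rw [if_neg]
      · simp [Matrix.one_apply, hab]
      rintro ⟨hC1, -⟩
      apply hab
      rw [← xcond_iff r hr a b]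
      intro l hl h2l
      have := hC1 l hl (Or.inr h2l)
      rwa [bitv_inl r hr h1 b l, bitv_inr_ge2 r hr h1 a l h2l] at this
  · -- inr inr : 0
    show Xmat r 1 2 _ _ = (0 : Matrix _ _ ℂ) a b
    rw [Xmat, if_neg, Matrix.zero_apply]
    rintro ⟨-, h2⟩
    exact h2 1 (Finset.mem_range.2 (by omega)) le_rfl (by omega)
      (by rw [bitv_inr_one r hr h1 a, bitv_inr_one r hr h1 b])


lemma dEnt1_inl (r : ℕ) (hr : 3 ≤ r) (h1 : 1 ≤ r - 1) (α : ℂ) (a : Fin (2 ^ (r - 1 - 1))) :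
    dEnt r 1 α (sumEquiv (r - 1) h1 (Sum.inl a)) = cc α := by
  have hlt : ((sumEquiv (r - 1) h1 (Sum.inl a) : Fin (2 ^ (r - 1))) : ℕ) < 2 ^ (r - 2) := by
    rw [sumEquiv_val_inl, show r - 2 = r - 1 - 1 from by omega]
    exact a.isLt
  simp [dEnt, hlt]

lemma dEnt1_inr (r : ℕ) (hr : 3 ≤ r) (h1 : 1 ≤ r - 1) (α : ℂ) (a : Fin (2 ^ (r - 1 - 1))) :
    dEnt r 1 α (sumEquiv (r - 1) h1 (Sum.inr a)) = ss α := by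
  have hlt : ¬ ((sumEquiv (r - 1) h1 (Sum.inr a) : Fin (2 ^ (r - 1))) : ℕ) < 2 ^ (r - 2) := by
    rw [sumEquiv_val_inr, show r - 2 = r - 1 - 1 from by omega]
    omega
  simp [dEnt, hlt]

lemma dEnt2_inl (r : ℕ) (hr : 3 ≤ r) (h1 : 1 ≤ r - 1) (α : ℂ) (a : Fin (2 ^ (r - 1 - 1))) :
    dEnt r 2 α (sumEquiv (r - 1) h1 (Sum.inl a)) = dEnt (r - 1) 1 α a := by
  have hlt : ((sumEquiv (r - 1) h1 (Sum.inl a) : Fin (2 ^ (r - 1))) : ℕ) < 2 ^ (r - 2) := by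
    rw [sumEquiv_val_inl, show r - 2 = r - 1 - 1 from by omega]
    exact a.isLt
  rw [dEnt.eq_3, dif_pos hlt]
  congr 1

lemma dEnt2_inr (r : ℕ) (hr : 3 ≤ r) (h1 : 1 ≤ r - 1) (α : ℂ) (a : Fin (2 ^ (r - 1 - 1))) :
    dEnt r 2 α (sumEquiv (r - 1) h1 (Sum.inr a)) = dEnt (r - 1) 1 (α + 1) a := by
  have hval : ((sumEquiv (r - 1) h1 (Sum.inr a) : Fin (2 ^ (r - 1))) : ℕ)
      = 2 ^ (r - 1 - 1) + (a : ℕ) := sumEquiv_val_inr (r - 1) h1 a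
  have hpow : (2 : ℕ) ^ (r - 2) = 2 ^ (r - 1 - 1) := by
    rw [show r - 2 = r - 1 - 1 from by omega]
  have hlt : ¬ ((sumEquiv (r - 1) h1 (Sum.inr a) : Fin (2 ^ (r - 1))) : ℕ) < 2 ^ (r - 2) := by
    rw [hval, hpow]; omega
  rw [dEnt.eq_3, dif_neg hlt]
  congr 1
  apply Fin.ext
  show ((sumEquiv (r - 1) h1 (Sum.inr a) : Fin (2 ^ (r - 1))) : ℕ) - 2 ^ (r - 2) = (a : ℕ)
  rw [hval, hpow]
  omega

lemma Dmat1_submatrix (r : ℕ) (hr : 3 ≤ r) (h1 : 1 ≤ r - 1) (α : ℂ) :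
    (Dmat r 1 α).submatrix (sumEquiv (r - 1) h1) (sumEquiv (r - 1) h1) =
      Matrix.fromBlocks (cc α • 1) 0 0 (ss α • 1) := by
  ext p q
  rcases p with a | a <;> rcases q with b | b <;>
    simp only [Matrix.submatrix_apply, Dmat, Matrix.diagonal_apply,
      Matrix.fromBlocks_apply₁₁, Matrix.fromBlocks_apply₁₂, Matrix.fromBlocks_apply₂₁,
      Matrix.fromBlocks_apply₂₂, Matrix.smul_apply, Matrix.one_apply, Matrix.zero_apply,
      Equiv.apply_eq_iff_eq, smul_eq_mul]
  · rw [dEnt1_inl r hr h1 α a]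
    by_cases hab : a = b <;> simp [hab]
  · simp
  · simp
  · rw [dEnt1_inr r hr h1 α a]
    by_cases hab : a = b <;> simp [hab]

lemma Dmat2_submatrix (r : ℕ) (hr : 3 ≤ r) (h1 : 1 ≤ r - 1) (α : ℂ) :
    (Dmat r 2 α).submatrix (sumEquiv (r - 1) h1) (sumEquiv (r - 1) h1) =
      Matrix.fromBlocks (Dmat (r - 1) 1 α) 0 0 (Dmat (r - 1) 1 (α + 1)) := by
  ext p q
  rcases p with a | a <;> rcases q with b | b <;>
    simp only [Matrix.submatrix_apply, Dmat, Matrix.diagonal_apply,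
      Matrix.fromBlocks_apply₁₁, Matrix.fromBlocks_apply₁₂, Matrix.fromBlocks_apply₂₁,
      Matrix.fromBlocks_apply₂₂, Matrix.zero_apply, Equiv.apply_eq_iff_eq]
  · rw [dEnt2_inl r hr h1 α a]
    by_cases hab : a = b <;> simp [hab]
  · simp
  · simp
  · rw [dEnt2_inr r hr h1 α a]
    by_cases hab : a = b <;> simp [hab]

lemma Pmat_submatrix (r : ℕ) (hr : 3 ≤ r) (h1 : 1 ≤ r - 1) (θ : ℝ) :
    (Pmat r 1 2 θ).submatrix (sumEquiv (r - 1) h1) (sumEquiv (r - 1) h1) =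
      cc θ • 1 + ss θ • Matrix.fromBlocks 0 (-1) 1 0 := by
  have h : (Pmat r 1 2 θ).submatrix (sumEquiv (r - 1) h1) (sumEquiv (r - 1) h1)
      = cc θ • (1 : Matrix (Fin (2 ^ (r - 1))) (Fin (2 ^ (r - 1))) ℂ).submatrix
            (sumEquiv (r - 1) h1) (sumEquiv (r - 1) h1)
        + ss θ • (Xmat r 1 2).submatrix (sumEquiv (r - 1) h1) (sumEquiv (r - 1) h1) := rfl
  rw [h, Matrix.submatrix_one_equiv, Xmat_submatrix r hr h1]

end Aux

lemma sqrt2_inv_mul : ((Real.sqrt 2 : ℂ))⁻¹ * ((Real.sqrt 2 : ℂ))⁻¹ = (2 : ℂ)⁻¹ := by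
  rw [← mul_inv]
  norm_num [← Complex.ofReal_mul, Real.mul_self_sqrt]

theorem statement5_aux (r : ℕ) (hr : 3 ≤ r) (α₁ α₂ : ℂ) (θ : ℝ) (h1 h2 h3 : 1 ≤ r - 1) :
    Ktilde (r - 1) h1 *
        (Matrix.reindex (sumEquiv (r - 1) h2) (sumEquiv (r - 1) h2)
          (Matrix.fromBlocks
            (Dmat (r - 1) 1 (α₁ + α₂ + θ)) (Dmat (r - 1) 1 (-(α₁ - α₂ - θ)))
            (Dmat (r - 1) 1 (-(α₁ - α₂ + θ))) (Dmat (r - 1) 1 (α₁ + α₂ - θ)))) *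
        Ktilde (r - 1) h3 =
      (2 : ℂ) • (Dmat r 2 α₂ * Pmat r 1 2 θ * Dmat r 1 α₁) := by
  rw [show Ktilde (r - 1) h3 = Ktilde (r - 1) h1 from rfl,
    show sumEquiv (r - 1) h2 = sumEquiv (r - 1) h1 from rfl]
  -- reduce to an equality of `submatrix`es along the block equivalence
  have hinj : ∀ (M N : Matrix (Fin (2 ^ (r - 1))) (Fin (2 ^ (r - 1))) ℂ),
      M.submatrix (sumEquiv (r - 1) h1) (sumEquiv (r - 1) h1)
        = N.submatrix (sumEquiv (r - 1) h1) (sumEquiv (r - 1) h1) → M = N := by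
    intro M N h
    have h' := congrArg
      (fun X : Matrix (Fin (2 ^ (r - 1 - 1)) ⊕ Fin (2 ^ (r - 1 - 1)))
          (Fin (2 ^ (r - 1 - 1)) ⊕ Fin (2 ^ (r - 1 - 1))) ℂ =>
        X.submatrix (sumEquiv (r - 1) h1).symm (sumEquiv (r - 1) h1).symm) h
    simpa [Matrix.submatrix_submatrix, Equiv.self_comp_symm, Matrix.submatrix_id_id]
      using h'
  apply hinj
  have hK : Ktilde (r - 1) h1 =
      (((Real.sqrt 2 : ℂ))⁻¹ •
        Matrix.fromBlocks (1 : Matrix (Fin (2 ^ (r - 1 - 1))) (Fin (2 ^ (r - 1 - 1))) ℂ) 1 1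
          (-1)).submatrix (sumEquiv (r - 1) h1).symm (sumEquiv (r - 1) h1).symm := rfl
  rw [hK, Matrix.reindex_apply]
  rw [Matrix.submatrix_mul_equiv _ _ _ (sumEquiv (r - 1) h1).symm _,
    Matrix.submatrix_mul_equiv _ _ _ (sumEquiv (r - 1) h1).symm _,
    Matrix.submatrix_submatrix, Equiv.symm_comp_self, Matrix.submatrix_id_id]
  have hsmul : ∀ (x : ℂ) (A : Matrix (Fin (2 ^ (r - 1))) (Fin (2 ^ (r - 1))) ℂ),
      (x • A).submatrix (sumEquiv (r - 1) h1) (sumEquiv (r - 1) h1)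
        = x • A.submatrix (sumEquiv (r - 1) h1) (sumEquiv (r - 1) h1) := fun _ _ => rfl
  rw [hsmul,
    ← Matrix.submatrix_mul_equiv (Dmat r 2 α₂ * Pmat r 1 2 θ) (Dmat r 1 α₁)
      (⇑(sumEquiv (r - 1) h1)) (sumEquiv (r - 1) h1) (⇑(sumEquiv (r - 1) h1)),
    ← Matrix.submatrix_mul_equiv (Dmat r 2 α₂) (Pmat r 1 2 θ)
      (⇑(sumEquiv (r - 1) h1)) (sumEquiv (r - 1) h1) (⇑(sumEquiv (r - 1) h1)),
    Dmat2_submatrix r hr h1, Pmat_submatrix r hr h1, Dmat1_submatrix r hr h1]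
  -- now a pure block-matrix computation
  rw [Matrix.smul_mul, Matrix.mul_smul, Matrix.smul_mul, smul_smul, sqrt2_inv_mul]
  simp only [Matrix.mul_add, Matrix.mul_smul, Matrix.mul_one, Matrix.add_mul,
    Matrix.smul_mul, Matrix.fromBlocks_multiply, smul_add, smul_smul,
    Matrix.mul_zero, Matrix.zero_mul, Matrix.one_mul, add_zero, zero_add,
    Matrix.neg_mul, Matrix.mul_neg, Matrix.fromBlocks_smul, Matrix.fromBlocks_add,
    smul_neg, neg_zero, smul_zero]
  ext p q
  rcases p with a | a <;> rcases q with b | b <;>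
    simp only [Matrix.fromBlocks_apply₁₁, Matrix.fromBlocks_apply₁₂,
      Matrix.fromBlocks_apply₂₁, Matrix.fromBlocks_apply₂₂, Dmat,
      Matrix.diagonal_mul_diagonal, Matrix.smul_apply, Matrix.add_apply,
      Matrix.neg_apply, Matrix.diagonal_apply, Matrix.one_apply, Matrix.mul_apply,
      smul_eq_mul, Matrix.zero_apply] <;>
  · rcases eq_or_ne a b with rfl | hab
    · simp only [if_pos rfl, dEnt]
      by_cases hlt : (a : ℕ) < 2 ^ (r - 1 - 2) <;>
        simp only [hlt, if_true, if_false] <;>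
        simp only [cc_add', ss_add', cc_neg', ss_neg', cc_one', ss_one',
          sub_eq_add_neg] <;>
        ring
    · simp [hab]





/-- for `r ≥ 3`,
`K̃ · [[D₁₁, D₁₂], [D₂₁, D₂₂]] · K̃ = 2 · D_2^(r)(α₂) · P_{21}^(r)(θ) · D_1^(r)(α₁)`
with the blocks `D₁₁ = D_1^(r-1)(α₁+α₂+θ)`, `D₁₂ = D_1^(r-1)(-(α₁-α₂-θ))`,
`D₂₁ = D_1^(r-1)(-(α₁-α₂+θ))`, `D₂₂ = D_1^(r-1)(α₁+α₂-θ)`. -/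
theorem statement5 (r : ℕ) (hr : 3 ≤ r) (α₁ α₂ : ℂ) (θ : ℝ) :
    Ktilde (r - 1) (by omega) *
        (Matrix.reindex (sumEquiv (r - 1) (by omega)) (sumEquiv (r - 1) (by omega))
          (Matrix.fromBlocks
            (Dmat (r - 1) 1 (α₁ + α₂ + θ)) (Dmat (r - 1) 1 (-(α₁ - α₂ - θ)))
            (Dmat (r - 1) 1 (-(α₁ - α₂ + θ))) (Dmat (r - 1) 1 (α₁ + α₂ - θ)))) *
        Ktilde (r - 1) (by omega) =
      (2 : ℂ) • (Dmat r 2 α₂ * Pmat r 1 2 θ * Dmat r 1 α₁) := by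
  exact statement5_aux r hr α₁ α₂ θ (by omega) (by omega) (by omega)

end HomCone
end
end

section
/- Let r ≥ 3, 3 ≤ k ≤ r, θ ∈ ℝ, and α ∈ ℂ. With K̃ = (1/√2)[[I, I], [I, -I]], I = I_{2^{r-2}}, one has K̃ · diag(P_{k-1,1}^(r-1)(θ), transpose(P_{k-1,1}^(r-1)(θ))) · K̃ · D_2^(r)(α) = D_2^(r)(α) · P_{k1}^(r)(θ). -/
/-!
Common definitions for zeta functions associated with homogeneous cones
(following Nakashima, "Functional equations of zeta functions associated
with homogeneous cones"): the functions `c(z) = cos (π z / 2)`,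
`s(z) = sin (π z / 2)`, the recursive ordering of the sign set
`I_r = {1,-1}^r`, the Hadamard matrices `J^(r)`, the gamma-matrix
`A_r(α; Θ)`, the matrices `C_r`, `S_r`, the diagonal matrices `D_j^(r)(α)`,
and the rotation matrices `P_{kj}^(r)(θ) = c(θ)·I + s(θ)·X_{kj}^(r)`.
Matrices indexed by `I_s` are identified with `2^s × 2^s` matrices via the
recursive ordering, which is encoded by `ord s : Fin (2^s) → (Fin s → ℤ)`,
sending a position to the corresponding sign vector.
-/

noncomputable section
open Matrix Complex

namespace HomCone

/-! ### Auxiliary lemmas -/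

lemma cc_add_one (α : ℂ) : cc (α + 1) = - ss α := by
  have h : (Real.pi : ℂ) * (α + 1) / 2 = Real.pi * α / 2 + Real.pi / 2 := by ring
  rw [cc, ss, h, Complex.cos_add, Complex.cos_pi_div_two, Complex.sin_pi_div_two]
  ring

lemma ss_add_one (α : ℂ) : ss (α + 1) = cc α := by
  have h : (Real.pi : ℂ) * (α + 1) / 2 = Real.pi * α / 2 + Real.pi / 2 := by ring
  rw [ss, cc, h, Complex.sin_add, Complex.cos_pi_div_two, Complex.sin_pi_div_two]
  ring

lemma bitv_zero' (m : ℕ) (i : Fin (2^m)) : bitv m i 0 = 0 := by simp [bitv]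

lemma bitv_cases (m : ℕ) (i : Fin (2^m)) (l : ℕ) : bitv m i l = 0 ∨ bitv m i l = 1 := by
  rw [bitv]; split <;> simp

lemma bitv_one' (m : ℕ) (hm : 1 ≤ m) (i : Fin (2^m)) :
    bitv m i 1 = if 2^(m-1) ≤ (i:ℕ) then 1 else 0 := by
  have hi := i.isLt
  have h2 : (2:ℕ)^m = 2^(m-1) * 2 := by
    conv_lhs => rw [show m = m - 1 + 1 by omega]
    rw [pow_succ]
  have ht : (i:ℕ).testBit (m-1) = decide ((i:ℕ) / 2^(m-1) % 2 = 1) := Nat.testBit_eq_decide_div_mod_eq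
  have hp : 0 < (2:ℕ)^(m-1) := Nat.two_pow_pos _
  by_cases hc : 2^(m-1) ≤ (i:ℕ)
  · have hd : (i:ℕ) / 2^(m-1) = 1 := by
      have h1 : 1 ≤ (i:ℕ) / 2^(m-1) := (Nat.le_div_iff_mul_le hp).mpr (by omega)
      have h2' : (i:ℕ) / 2^(m-1) < 2 := Nat.div_lt_of_lt_mul (by omega)
      omega
    rw [bitv]
    simp [hm, ht, hd, hc]
  · have hd : (i:ℕ) / 2^(m-1) = 0 := Nat.div_eq_of_lt (by omega)
    rw [bitv]
    simp [hm, ht, hd, hc]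

lemma bitv_low (m : ℕ) (hm : 2 ≤ m) (i : Fin (2^m)) (a : Fin (2^(m-1)))
    (ha : (a:ℕ) = (i:ℕ) % 2^(m-1)) (l : ℕ) (hl : 2 ≤ l) :
    bitv m i l = bitv (m-1) a (l-1) := by
  by_cases hlm : l ≤ m
  · have hmm : m - 1 - (l - 1) = m - l := by omega
    have hb : (a:ℕ).testBit (m - l) = (i:ℕ).testBit (m - l) := by
      rw [ha, Nat.testBit_mod_two_pow]
      have hlt : m - l < m - 1 := by omega
      simp [hlt]
    rw [bitv, bitv, hmm, hb]
    have c1 : 1 ≤ l := by omega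
    have c2 : 1 ≤ l - 1 := by omega
    have c3 : l - 1 ≤ m - 1 := by omega
    simp [c1, c2, c3, hlm]
  · rw [bitv, bitv]
    have h' : ¬ (l - 1 ≤ m - 1) := by omega
    simp [hlm, h']

lemma dEnt_one' (m : ℕ) (β : ℂ) (a : Fin (2^(m-1))) :
    dEnt m 1 β a = if (a:ℕ) < 2^(m-2) then cc β else ss β := by
  rw [dEnt]

lemma dEnt_two' (r : ℕ) (hr : 3 ≤ r) (α : ℂ) (i : Fin (2^(r-1))) :
    dEnt r 2 α i =
      if 2^(r-1-1) ≤ (i:ℕ) then (if (i:ℕ) % 2^(r-1-1) < 2^(r-1-1-1) then -ss α else cc α)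
      else (if (i:ℕ) % 2^(r-1-1) < 2^(r-1-1-1) then cc α else ss α) := by
  have e1 : r - 1 - 1 = r - 2 := by omega
  have e3 : r - 1 - 2 = r - 1 - 1 - 1 := by omega
  have hi := i.isLt
  have h2p : (2:ℕ)^(r-1) = 2^(r-2) * 2 := by
    conv_lhs => rw [show r - 1 = (r-2) + 1 by omega]
    rw [pow_succ]
  rcases lt_or_ge (i:ℕ) (2^(r-2)) with h | h
  · rw [dEnt, dif_pos h, dEnt_one']
    have hmod : (i:ℕ) % 2^(r-1-1) = (i:ℕ) := by rw [e1]; exact Nat.mod_eq_of_lt h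
    rw [if_neg (show ¬ 2^(r-1-1) ≤ (i:ℕ) by rw [e1]; omega), hmod]
    simp only [← e3]
  · rw [dEnt, dif_neg (by omega), dEnt_one', cc_add_one, ss_add_one]
    have hmod : (i:ℕ) % 2^(r-1-1) = (i:ℕ) - 2^(r-2) := by
      rw [e1, Nat.mod_eq_sub_mod (by omega), Nat.mod_eq_of_lt (by omega)]
    rw [if_pos (show 2^(r-1-1) ≤ (i:ℕ) by rw [e1]; omega), hmod]
    simp only [← e3]

lemma sumEquiv_symm_inl (m : ℕ) (h : 1 ≤ m) (i : Fin (2^m)) (hi : (i:ℕ) < 2^(m-1)) :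
    (sumEquiv m h).symm i = Sum.inl ⟨(i:ℕ), hi⟩ := by
  rw [Equiv.symm_apply_eq, Fin.ext_iff]
  simp [sumEquiv]

lemma sumEquiv_symm_inr (m : ℕ) (h : 1 ≤ m) (i : Fin (2^m)) (hi : 2^(m-1) ≤ (i:ℕ)) :
    (sumEquiv m h).symm i
      = Sum.inr ⟨(i:ℕ) - 2^(m-1), by have := i.isLt; have := two_pow_pred m h; omega⟩ := by
  rw [Equiv.symm_apply_eq, Fin.ext_iff]
  simp [sumEquiv]
  omega

lemma Xmat_transpose (m k : ℕ) (hm : 2 ≤ m) (hk : 2 ≤ k) :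
    (Xmat m 1 k)ᵀ = - Xmat m 1 k := by
  ext i j
  rw [Matrix.transpose_apply, Matrix.neg_apply]
  simp only [Xmat]
  by_cases hC : (∀ l ∈ Finset.range m, (l < 1 ∨ k ≤ l) → bitv (m-1) i l = bitv (m-1) j l)
      ∧ (∀ l ∈ Finset.range m, 1 ≤ l → l < k → bitv (m-1) i l ≠ bitv (m-1) j l)
  · rw [if_pos hC,
      if_pos (⟨fun l hl h => (hC.1 l hl h).symm, fun l hl h1 h2 hh => hC.2 l hl h1 h2 hh.symm⟩ :
        (∀ l ∈ Finset.range m, (l < 1 ∨ k ≤ l) → bitv (m-1) j l = bitv (m-1) i l)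
          ∧ (∀ l ∈ Finset.range m, 1 ≤ l → l < k → bitv (m-1) j l ≠ bitv (m-1) i l))]
    have hne := hC.2 1 (Finset.mem_range.mpr (by omega)) le_rfl (by omega)
    rcases bitv_cases (m-1) i 1 with h|h <;> rcases bitv_cases (m-1) j 1 with h'|h' <;>
      rw [h, h'] at hne ⊢ <;> simp at hne ⊢
  · rw [if_neg hC,
      if_neg (fun hh => hC ⟨fun l hl h => ((hh :
        (∀ l ∈ Finset.range m, (l < 1 ∨ k ≤ l) → bitv (m-1) j l = bitv (m-1) i l)
          ∧ (∀ l ∈ Finset.range m, 1 ≤ l → l < k → bitv (m-1) j l ≠ bitv (m-1) i l)).1 l hl h).symm,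
        fun l hl h1 h2 he => hh.2 l hl h1 h2 he.symm⟩), neg_zero]

lemma Pmat_transpose (m k : ℕ) (hm : 2 ≤ m) (hk : 2 ≤ k) (θ : ℝ) :
    (Pmat m 1 k θ)ᵀ = cc θ • 1 - ss θ • Xmat m 1 k := by
  rw [Pmat, Matrix.transpose_add, Matrix.transpose_smul, Matrix.transpose_smul,
    Matrix.transpose_one, Xmat_transpose m k hm hk, smul_neg, sub_eq_add_neg]

lemma cond_iff (r k : ℕ) (hr : 3 ≤ r) (hk3 : 3 ≤ k) (hkr : k ≤ r)
    (i j : Fin (2^(r-1))) (a b : Fin (2^(r-1-1)))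
    (hav : (a:ℕ) = (i:ℕ) % 2^(r-1-1)) (hbv : (b:ℕ) = (j:ℕ) % 2^(r-1-1))
    (htop : bitv (r-1) i 1 ≠ bitv (r-1) j 1) :
    ((∀ l ∈ Finset.range r, (l < 1 ∨ k ≤ l) → bitv (r-1) i l = bitv (r-1) j l)
      ∧ (∀ l ∈ Finset.range r, 1 ≤ l → l < k → bitv (r-1) i l ≠ bitv (r-1) j l))
    ↔ ((∀ l ∈ Finset.range (r-1), (l < 1 ∨ k-1 ≤ l) → bitv (r-1-1) a l = bitv (r-1-1) b l)
      ∧ (∀ l ∈ Finset.range (r-1), 1 ≤ l → l < k-1 → bitv (r-1-1) a l ≠ bitv (r-1-1) b l)) := by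
  have hm : 2 ≤ r - 1 := by omega
  have hba : ∀ l, 2 ≤ l → bitv (r-1) i l = bitv (r-1-1) a (l-1) :=
    fun l hl => bitv_low (r-1) hm i a hav l hl
  have hbb : ∀ l, 2 ≤ l → bitv (r-1) j l = bitv (r-1-1) b (l-1) :=
    fun l hl => bitv_low (r-1) hm j b hbv l hl
  constructor
  · rintro ⟨h1, h2⟩
    constructor
    · intro l hl hor
      rcases Nat.eq_zero_or_pos l with h0 | h0
      · subst h0; rw [bitv_zero', bitv_zero']
      · have hk' : k - 1 ≤ l := by
          rcases hor with h | h
          · omega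
          · exact h
        have e1 := hba (l+1) (by omega)
        have e2 := hbb (l+1) (by omega)
        simp only [Nat.add_sub_cancel] at e1 e2
        rw [← e1, ← e2]
        exact h1 (l+1) (Finset.mem_range.mpr (by have := Finset.mem_range.mp hl; omega))
          (Or.inr (by omega))
    · intro l hl hl1 hlk
      have e1 := hba (l+1) (by omega)
      have e2 := hbb (l+1) (by omega)
      simp only [Nat.add_sub_cancel] at e1 e2
      rw [← e1, ← e2]
      exact h2 (l+1) (Finset.mem_range.mpr (by have := Finset.mem_range.mp hl; omega))
        (by omega) (by omega)
  · rintro ⟨h1, h2⟩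
    constructor
    · intro l hl hor
      rcases Nat.eq_zero_or_pos l with h0 | h0
      · subst h0; rw [bitv_zero', bitv_zero']
      · have hk' : k ≤ l := by
          rcases hor with h | h
          · omega
          · exact h
        rw [hba l (by omega), hbb l (by omega)]
        exact h1 (l-1) (Finset.mem_range.mpr (by have := Finset.mem_range.mp hl; omega))
          (Or.inr (by omega))
    · intro l hl hl1 hlk
      rcases Nat.lt_or_ge l 2 with h0 | h0
      · have hl1' : l = 1 := by omega
        subst hl1'
        exact htop
      · rw [hba l h0, hbb l h0]
        exact h2 (l-1) (Finset.mem_range.mpr (by have := Finset.mem_range.mp hl; omega))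
          (by omega) (by omega)

set_option maxHeartbeats 1600000 in
lemma entry_mixed (r k : ℕ) (hr : 3 ≤ r) (hk3 : 3 ≤ k) (hkr : k ≤ r) (α : ℂ)
    (i j : Fin (2^(r-1))) (a b : Fin (2^(r-1-1)))
    (hav : (a:ℕ) = (i:ℕ) % 2^(r-1-1)) (hbv : (b:ℕ) = (j:ℕ) % 2^(r-1-1))
    (htop : bitv (r-1) i 1 ≠ bitv (r-1) j 1) :
    Xmat (r-1) 1 (k-1) a b * dEnt r 2 α j = dEnt r 2 α i * Xmat r 1 k i j := by
  have hb2a := bitv_one' (r-1-1) (by omega) a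
  have hb2b := bitv_one' (r-1-1) (by omega) b
  have hb1i := bitv_one' (r-1) (by omega) i
  have hb1j := bitv_one' (r-1) (by omega) j
  have hiff := cond_iff r k hr hk3 hkr i j a b hav hbv htop
  by_cases hC : (∀ l ∈ Finset.range (r-1), (l < 1 ∨ k-1 ≤ l) → bitv (r-1-1) a l = bitv (r-1-1) b l)
      ∧ (∀ l ∈ Finset.range (r-1), 1 ≤ l → l < k-1 → bitv (r-1-1) a l ≠ bitv (r-1-1) b l)
  · have hsign := hC.2 1 (Finset.mem_range.mpr (by omega)) le_rfl (by omega)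
    rw [hb2a, hb2b, hav, hbv] at hsign
    rw [hb1i, hb1j] at htop
    simp only [Xmat]
    rw [if_pos hC, if_pos (hiff.mpr hC)]
    rw [dEnt_two' r hr α i, dEnt_two' r hr α j, hb2a, hav, hb1i]
    set p := (2:ℕ)^(r-1-1) with hp
    set q := (2:ℕ)^(r-1-1-1) with hq
    set x := (i:ℕ) % p with hx
    set y := (j:ℕ) % p with hy
    have htop' : (p ≤ (i:ℕ) ∧ ¬ p ≤ (j:ℕ)) ∨ (¬ p ≤ (i:ℕ) ∧ p ≤ (j:ℕ)) := by
      by_cases c1 : p ≤ (i:ℕ) <;> by_cases c2 : p ≤ (j:ℕ) <;> simp [c1, c2] at htop <;> tauto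
    have hsign' : (q ≤ x ∧ ¬ q ≤ y) ∨ (¬ q ≤ x ∧ q ≤ y) := by
      by_cases d1 : q ≤ x <;> by_cases d2 : q ≤ y <;> simp [d1, d2] at hsign <;> tauto
    rcases htop' with ⟨c1, c2⟩ | ⟨c1, c2⟩ <;> rcases hsign' with ⟨d1, d2⟩ | ⟨d1, d2⟩ <;>
      split_ifs
    all_goals first | ring1 | (exfalso; first | contradiction | omega)
  · simp only [Xmat]
    rw [if_neg hC, if_neg (fun hh => hC (hiff.mp hh)), zero_mul, mul_zero]

lemma core (r k : ℕ) (hr : 3 ≤ r) (hk3 : 3 ≤ k) (hkr : k ≤ r) (h1 : 1 ≤ r - 1) (α : ℂ) :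
    (Matrix.fromBlocks 0 (Xmat (r-1) 1 (k-1)) (Xmat (r-1) 1 (k-1)) 0).submatrix
        (⇑(sumEquiv (r-1) h1).symm) (⇑(sumEquiv (r-1) h1).symm) *
      Dmat r 2 α = Dmat r 2 α * Xmat r 1 k := by
  ext i j
  rw [Dmat, Matrix.mul_diagonal, Matrix.diagonal_mul, Matrix.submatrix_apply]
  have hi := i.isLt
  have hj := j.isLt
  have hb1i := bitv_one' (r-1) (by omega) i
  have hb1j := bitv_one' (r-1) (by omega) j
  rcases lt_or_ge (i:ℕ) (2^(r-1-1)) with hti | hti <;>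
    rcases lt_or_ge (j:ℕ) (2^(r-1-1)) with htj | htj
  · rw [sumEquiv_symm_inl _ _ i hti, sumEquiv_symm_inl _ _ j htj, Matrix.fromBlocks_apply₁₁,
      Matrix.zero_apply, zero_mul]
    have hx : Xmat r 1 k i j = 0 := by
      simp only [Xmat]
      rw [if_neg]
      rintro ⟨-, h2⟩
      have h3 := h2 1 (Finset.mem_range.mpr (by omega)) le_rfl (by omega)
      rw [hb1i, hb1j, if_neg (by omega), if_neg (by omega)] at h3
      exact h3 rfl
    rw [hx, mul_zero]
  · rw [sumEquiv_symm_inl _ _ i hti, sumEquiv_symm_inr _ _ j htj, Matrix.fromBlocks_apply₁₂]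
    refine entry_mixed r k hr hk3 hkr α i j _ _ ?_ ?_ ?_
    · simp [Nat.mod_eq_of_lt hti]
    · show (j:ℕ) - 2^(r-1-1) = (j:ℕ) % 2^(r-1-1)
      have hpow : (2:ℕ)^(r-1) = 2^(r-1-1) * 2 := by
        conv_lhs => rw [show r - 1 = (r-1-1) + 1 by omega]
        rw [pow_succ]
      rw [Nat.mod_eq_sub_mod htj, Nat.mod_eq_of_lt (by omega)]
    · rw [hb1i, hb1j, if_neg (by omega), if_pos htj]
      omega
  · rw [sumEquiv_symm_inr _ _ i hti, sumEquiv_symm_inl _ _ j htj, Matrix.fromBlocks_apply₂₁]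
    refine entry_mixed r k hr hk3 hkr α i j _ _ ?_ ?_ ?_
    · show (i:ℕ) - 2^(r-1-1) = (i:ℕ) % 2^(r-1-1)
      have hpow : (2:ℕ)^(r-1) = 2^(r-1-1) * 2 := by
        conv_lhs => rw [show r - 1 = (r-1-1) + 1 by omega]
        rw [pow_succ]
      rw [Nat.mod_eq_sub_mod hti, Nat.mod_eq_of_lt (by omega)]
    · simp [Nat.mod_eq_of_lt htj]
    · rw [hb1i, hb1j, if_pos hti, if_neg (by omega)]
      omega
  · rw [sumEquiv_symm_inr _ _ i hti, sumEquiv_symm_inr _ _ j htj, Matrix.fromBlocks_apply₂₂,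
      Matrix.zero_apply, zero_mul]
    have hx : Xmat r 1 k i j = 0 := by
      simp only [Xmat]
      rw [if_neg]
      rintro ⟨-, h2⟩
      have h3 := h2 1 (Finset.mem_range.mpr (by omega)) le_rfl (by omega)
      rw [hb1i, hb1j, if_pos hti, if_pos htj] at h3
      exact h3 rfl
    rw [hx, mul_zero]

lemma Kblock (m k : ℕ) (hm : 2 ≤ m) (hk : 2 ≤ k) (θ : ℝ) :
    (((Real.sqrt 2 : ℂ))⁻¹ • Matrix.fromBlocks (1 : Matrix (Fin (2^(m-1))) (Fin (2^(m-1))) ℂ) 1 1 (-1)) *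
      Matrix.fromBlocks (Pmat m 1 k θ) 0 0 (Pmat m 1 k θ)ᵀ *
      (((Real.sqrt 2 : ℂ))⁻¹ • Matrix.fromBlocks 1 1 1 (-1)) =
    cc θ • 1 + ss θ • Matrix.fromBlocks 0 (Xmat m 1 k) (Xmat m 1 k) 0 := by
  have hc : ((Real.sqrt 2 : ℂ))⁻¹ * ((Real.sqrt 2 : ℂ))⁻¹ = (2:ℂ)⁻¹ := by
    rw [← mul_inv, ← Complex.ofReal_mul, Real.mul_self_sqrt (by norm_num)]
    norm_num
  rw [smul_mul_assoc, smul_mul_assoc, mul_smul_comm, smul_smul, hc]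
  rw [Matrix.fromBlocks_multiply, Matrix.fromBlocks_multiply]
  simp only [Matrix.one_mul, Matrix.mul_one, Matrix.zero_mul, Matrix.mul_zero, add_zero,
    zero_add, Matrix.neg_mul, Matrix.mul_neg, neg_neg, neg_zero]
  rw [Pmat_transpose m k hm hk, Pmat]
  rw [show (1 : Matrix (Fin (2^(m-1)) ⊕ Fin (2^(m-1))) (Fin (2^(m-1)) ⊕ Fin (2^(m-1))) ℂ)
      = Matrix.fromBlocks 1 0 0 1 from Matrix.fromBlocks_one.symm,
    Matrix.fromBlocks_smul, Matrix.fromBlocks_smul, Matrix.fromBlocks_smul,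
    Matrix.fromBlocks_add]
  rw [Matrix.fromBlocks_inj]
  refine ⟨?_, ?_, ?_, ?_⟩ <;> module

/-- for `3 ≤ k ≤ r`,
`K̃ · diag(P_{k-1,1}^(r-1)(θ), (P_{k-1,1}^(r-1)(θ))ᵀ) · K̃ · D_2^(r)(α)
  = D_2^(r)(α) · P_{k1}^(r)(θ)`. -/
theorem statement7 (r k : ℕ) (hr : 3 ≤ r) (hk3 : 3 ≤ k) (hkr : k ≤ r) (θ : ℝ) (α : ℂ) :
    Ktilde (r - 1) (by omega) *
        (Matrix.reindex (sumEquiv (r - 1) (by omega)) (sumEquiv (r - 1) (by omega))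
          (Matrix.fromBlocks (Pmat (r - 1) 1 (k - 1) θ) 0 0 (Pmat (r - 1) 1 (k - 1) θ)ᵀ)) *
        Ktilde (r - 1) (by omega) * Dmat r 2 α =
      Dmat r 2 α * Pmat r 1 k θ := by
  simp only [Ktilde, Matrix.reindex_apply]
  rw [Matrix.submatrix_mul_equiv, Matrix.submatrix_mul_equiv]
  rw [Kblock (r-1) (k-1) (by omega) (by omega) θ]
  simp only [Matrix.submatrix_add, Matrix.submatrix_smul, Pi.add_apply, Pi.smul_apply]
  rw [Matrix.submatrix_one_equiv]
  rw [Pmat]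
  rw [add_mul, mul_add, smul_mul_assoc, smul_mul_assoc, mul_smul_comm, mul_smul_comm,
    Matrix.one_mul, Matrix.mul_one]
  rw [core r k hr hk3 hkr (by omega) α]

end HomCone
end
end

section
/- Let r ≥ 2, α ∈ ℂ^r, and Θ = (θ_{kj})_{1≤j<k≤r} be real numbers. Then det A_r(α;Θ) = Π_{j=1}^r (2 sin πα_j)^{2^{r-1}}; in particular, the determinant does not depend on Θ. Consequently, writing Γ(α) = Γ(α₁)⋯Γ(α_r) and |α| = α₁+⋯+α_r, the matrix Ã_r(α;Θ) := (Γ(α)/(2π)^{|α|}) · A_r(α;Θ) satisfies det Ã_r(α;Θ) = (Γ(α)/(2π)^{|α|})^{2^r} · (Π_{j=1}^r 2 sin πα_j)^{2^{r-1}}. -/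
/-!
Common definitions for zeta functions associated with homogeneous cones
(following Nakashima, "Functional equations of zeta functions associated
with homogeneous cones"): the functions `c(z) = cos (π z / 2)`,
`s(z) = sin (π z / 2)`, the recursive ordering of the sign set
`I_r = {1,-1}^r`, the Hadamard matrices `J^(r)`, the gamma-matrix
`A_r(α; Θ)`, the matrices `C_r`, `S_r`, the diagonal matrices `D_j^(r)(α)`,
and the rotation matrices `P_{kj}^(r)(θ) = c(θ)·I + s(θ)·X_{kj}^(r)`.
Matrices indexed by `I_s` are identified with `2^s × 2^s` matrices via the
recursive ordering, which is encoded by `ord s : Fin (2^s) → (Fin s → ℤ)`,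
sending a position to the corresponding sign vector.
-/

noncomputable section
open Matrix Complex

namespace HomCone


/-! ### Auxiliary machinery for Statement 8 -/

section Aux

/-- The sum decomposition of `Fin (2^(s+1))` into two copies of `Fin (2^s)`. -/
def esum (s : ℕ) : Fin (2 ^ s) ⊕ Fin (2 ^ s) ≃ Fin (2 ^ (s + 1)) :=
  finSumFinEquiv.trans (finCongr (by rw [pow_succ]; omega))

lemma esum_inl_val (s : ℕ) (i : Fin (2 ^ s)) :
    ((esum s (Sum.inl i) : Fin (2 ^ (s + 1))) : ℕ) = (i : ℕ) := rfl

lemma esum_inr_val (s : ℕ) (i : Fin (2 ^ s)) :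
    ((esum s (Sum.inr i) : Fin (2 ^ (s + 1))) : ℕ) = 2 ^ s + (i : ℕ) := rfl

/-- Negation of a sign vector, at the level of positions. -/
def negIdx : (s : ℕ) → Fin (2 ^ s) → Fin (2 ^ s)
  | 0, i => i
  | s + 1, i =>
    if h : (i : ℕ) < 2 ^ s then
      ⟨(i : ℕ) + 2 ^ s, by have := i.isLt; have h2 : 2 ^ (s+1) = 2 ^ s * 2 := pow_succ 2 s; omega⟩
    else
      ⟨(i : ℕ) - 2 ^ s, by have := i.isLt; have h2 : 2 ^ (s+1) = 2 ^ s * 2 := pow_succ 2 s; omega⟩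

lemma ord_zero_of_lt (s : ℕ) (i : Fin (2 ^ (s + 1))) (h : (i : ℕ) < 2 ^ s) :
    ord (s + 1) i 0 = 1 := by
  simp [ord, h]

lemma ord_succ_of_lt (s : ℕ) (i : Fin (2 ^ (s + 1))) (h : (i : ℕ) < 2 ^ s) (a : Fin s) :
    ord (s + 1) i a.succ = ord s ⟨(i : ℕ), h⟩ a := by
  simp [ord, h, Fin.succ]

lemma ord_zero_of_ge (s : ℕ) (i : Fin (2 ^ (s + 1))) (h : ¬ (i : ℕ) < 2 ^ s) :
    ord (s + 1) i 0 = -1 := by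
  simp [ord, h]

lemma ord_succ_of_ge (s : ℕ) (i : Fin (2 ^ (s + 1))) (h : ¬ (i : ℕ) < 2 ^ s) (a : Fin s) :
    ord (s + 1) i a.succ = - ord s ⟨(i : ℕ) - 2 ^ s, by
      have := i.isLt; have h2 : 2 ^ (s+1) = 2 ^ s * 2 := pow_succ 2 s; omega⟩ a := by
  simp [ord, h, Fin.succ]

lemma ord_negIdx (s : ℕ) (i : Fin (2 ^ s)) (j : Fin s) :
    ord s (negIdx s i) j = - ord s i j := by
  cases s with
  | zero => exact j.elim0
  | succ t =>
    by_cases h : (i : ℕ) < 2 ^ t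
    · have hni : negIdx (t + 1) i = ⟨(i : ℕ) + 2 ^ t, by
        have := i.isLt; have h2 : 2 ^ (t+1) = 2 ^ t * 2 := pow_succ 2 t; omega⟩ := by
        simp [negIdx, h]
      rw [hni]
      induction j using Fin.cases with
      | zero =>
        rw [ord_zero_of_ge _ _ (by simp), ord_zero_of_lt _ _ h]
      | succ a =>
        rw [ord_succ_of_ge _ _ (by simp), ord_succ_of_lt _ _ h a]
        congr 2
        simp
    · have hni : negIdx (t + 1) i = ⟨(i : ℕ) - 2 ^ t, by
        have := i.isLt; have h2 : 2 ^ (t+1) = 2 ^ t * 2 := pow_succ 2 t; omega⟩ := by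
        simp [negIdx, h]
      have hlt : (i : ℕ) - 2 ^ t < 2 ^ t := by
        have := i.isLt; have h2 : 2 ^ (t+1) = 2 ^ t * 2 := pow_succ 2 t; omega
      rw [hni]
      induction j using Fin.cases with
      | zero =>
        rw [ord_zero_of_lt _ _ hlt, ord_zero_of_ge _ _ h]; ring
      | succ a =>
        rw [ord_succ_of_lt _ _ hlt, ord_succ_of_ge _ _ h a]; ring

lemma negIdx_esum_inl (s : ℕ) (d : Fin (2 ^ s)) :
    negIdx (s + 1) (esum s (Sum.inl d)) = esum s (Sum.inr d) := by
  have h : ((esum s (Sum.inl d) : Fin (2 ^ (s+1))) : ℕ) < 2 ^ s := by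
    rw [esum_inl_val]; exact d.isLt
  apply Fin.ext
  simp [negIdx, h, esum_inl_val, esum_inr_val]
  omega

lemma negIdx_esum_inr (s : ℕ) (d : Fin (2 ^ s)) :
    negIdx (s + 1) (esum s (Sum.inr d)) = esum s (Sum.inl d) := by
  have h : ¬ ((esum s (Sum.inr d) : Fin (2 ^ (s+1))) : ℕ) < 2 ^ s := by
    rw [esum_inr_val]; omega
  apply Fin.ext
  simp [negIdx, h, esum_inl_val, esum_inr_val]

/-- The diagonal correction factor `t(δ) = exp(c Σ_k δ_k θ_{k+1,1})`. -/
def tFun (s : ℕ) (Θ : Fin (s + 1) → Fin (s + 1) → ℝ) (δ : Fin (2 ^ s)) : ℂ :=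
  Complex.exp ((Real.pi : ℂ) * Complex.I / 2 *
    ∑ b : Fin s, (ord s δ b : ℂ) * (Θ b.succ 0 : ℂ))

lemma tFun_ne_zero (s : ℕ) (Θ : Fin (s + 1) → Fin (s + 1) → ℝ) (δ : Fin (2 ^ s)) :
    tFun s Θ δ ≠ 0 := Complex.exp_ne_zero _

lemma tFun_negIdx (s : ℕ) (Θ : Fin (s + 1) → Fin (s + 1) → ℝ) (δ : Fin (2 ^ s)) :
    tFun s Θ (negIdx s δ) = (tFun s Θ δ)⁻¹ := by
  rw [tFun, tFun, ← Complex.exp_neg]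
  congr 1
  simp only [ord_negIdx, Int.cast_neg, neg_mul, Finset.sum_neg_distrib]
  ring

lemma Amat_negIdx (s : ℕ) (α : Fin s → ℂ) (Θ : Fin s → Fin s → ℝ) (i i' : Fin (2 ^ s)) :
    Amat s α Θ (negIdx s i) i' = Amat s α Θ i (negIdx s i') := by
  unfold Amat
  congr 1
  simp only [ord_negIdx, Int.cast_neg, neg_mul, mul_neg]

/-- The diagonal-block of the recursion. -/
def Mblk (s : ℕ) (α : Fin (s + 1) → ℂ) (Θ : Fin (s + 1) → Fin (s + 1) → ℝ) :
    Matrix (Fin (2 ^ s)) (Fin (2 ^ s)) ℂ := fun i i' =>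
  Complex.exp ((Real.pi : ℂ) * Complex.I / 2 * α 0) *
    Amat s (fun a => α a.succ) (fun b a => Θ b.succ a.succ) i i' * tFun s Θ i'

/-- The off-diagonal block of the recursion. -/
def Nblk (s : ℕ) (α : Fin (s + 1) → ℂ) (Θ : Fin (s + 1) → Fin (s + 1) → ℝ) :
    Matrix (Fin (2 ^ s)) (Fin (2 ^ s)) ℂ := fun i i' =>
  Complex.exp ((Real.pi : ℂ) * Complex.I / 2 * (- α 0)) *
    Amat s (fun a => α a.succ) (fun b a => Θ b.succ a.succ) i (negIdx s i') * (tFun s Θ i')⁻¹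

lemma ord_esum_inl_zero (s : ℕ) (i : Fin (2 ^ s)) :
    ord (s + 1) (esum s (Sum.inl i)) 0 = 1 :=
  ord_zero_of_lt s _ (by rw [esum_inl_val]; exact i.isLt)

lemma ord_esum_inl_succ (s : ℕ) (i : Fin (2 ^ s)) (a : Fin s) :
    ord (s + 1) (esum s (Sum.inl i)) a.succ = ord s i a := by
  rw [ord_succ_of_lt s _ (by rw [esum_inl_val]; exact i.isLt)]
  congr 1

lemma ord_esum_inr_zero (s : ℕ) (i : Fin (2 ^ s)) :
    ord (s + 1) (esum s (Sum.inr i)) 0 = -1 :=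
  ord_zero_of_ge s _ (by rw [esum_inr_val]; omega)

lemma ord_esum_inr_succ (s : ℕ) (i : Fin (2 ^ s)) (a : Fin s) :
    ord (s + 1) (esum s (Sum.inr i)) a.succ = - ord s i a := by
  rw [ord_succ_of_ge s _ (by rw [esum_inr_val]; omega)]
  congr 2
  apply Fin.ext
  simp [esum_inr_val]

lemma Amat_succ_eq (s : ℕ) (α : Fin (s + 1) → ℂ) (Θ : Fin (s + 1) → Fin (s + 1) → ℝ) :
    (Amat (s + 1) α Θ).submatrix (esum s) (esum s) =
      Matrix.fromBlocks (Mblk s α Θ) (Nblk s α Θ) (Nblk s α Θ) (Mblk s α Θ) := by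
  ext x y
  cases x with
  | inl i =>
    cases y with
    | inl j =>
      show Amat (s + 1) α Θ (esum s (Sum.inl i)) (esum s (Sum.inl j)) = Mblk s α Θ i j
      simp only [Amat, Mblk, tFun]
      rw [← Complex.exp_add, ← Complex.exp_add]
      congr 1
      simp only [Fin.sum_univ_succ, ord_esum_inl_zero, ord_esum_inl_succ,
        lt_self_iff_false, if_false, Fin.not_lt_zero, Fin.succ_pos, if_true,
        Fin.succ_lt_succ_iff, Int.cast_one, one_mul, zero_add, add_zero,
        Finset.sum_neg_distrib, Int.cast_neg, neg_mul, mul_neg, neg_neg]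
      ring
    | inr j =>
      show Amat (s + 1) α Θ (esum s (Sum.inl i)) (esum s (Sum.inr j)) = Nblk s α Θ i j
      simp only [Amat, Nblk, tFun, ← Complex.exp_neg]
      rw [← Complex.exp_add, ← Complex.exp_add]
      congr 1
      simp only [Fin.sum_univ_succ, ord_esum_inl_zero, ord_esum_inr_zero,
        ord_esum_inl_succ, ord_esum_inr_succ, ord_negIdx,
        lt_self_iff_false, if_false, Fin.not_lt_zero, Fin.succ_pos, if_true,
        Fin.succ_lt_succ_iff, Int.cast_one, Int.cast_neg, one_mul, neg_mul,
        mul_neg, neg_neg, zero_add, add_zero, Finset.sum_neg_distrib]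
      ring
  | inr i =>
    cases y with
    | inl j =>
      show Amat (s + 1) α Θ (esum s (Sum.inr i)) (esum s (Sum.inl j)) = Nblk s α Θ i j
      simp only [Nblk]
      rw [← Amat_negIdx]
      simp only [Amat, tFun, ← Complex.exp_neg]
      rw [← Complex.exp_add, ← Complex.exp_add]
      congr 1
      simp only [Fin.sum_univ_succ, ord_esum_inr_zero, ord_esum_inl_zero,
        ord_esum_inl_succ, ord_esum_inr_succ, ord_negIdx,
        lt_self_iff_false, if_false, Fin.not_lt_zero, Fin.succ_pos, if_true,
        Fin.succ_lt_succ_iff, Int.cast_one, Int.cast_neg, one_mul, neg_mul,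
        mul_neg, neg_neg, zero_add, add_zero, Finset.sum_neg_distrib]
      ring
    | inr j =>
      show Amat (s + 1) α Θ (esum s (Sum.inr i)) (esum s (Sum.inr j)) = Mblk s α Θ i j
      simp only [Amat, Mblk, tFun]
      rw [← Complex.exp_add, ← Complex.exp_add]
      congr 1
      simp only [Fin.sum_univ_succ, ord_esum_inr_zero, ord_esum_inr_succ,
        lt_self_iff_false, if_false, Fin.not_lt_zero, Fin.succ_pos, if_true,
        Fin.succ_lt_succ_iff, Int.cast_one, Int.cast_neg, one_mul, neg_mul,
        mul_neg, neg_neg, zero_add, add_zero, Finset.sum_neg_distrib]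
      ring

/-- The right factor `Q` with parameters `z`, `w`. -/
def Qblk (s : ℕ) (Θ : Fin (s + 1) → Fin (s + 1) → ℝ) (z w : ℂ) :
    Matrix (Fin (2 ^ s)) (Fin (2 ^ s)) ℂ := fun k δ =>
  (if k = δ then z * tFun s Θ δ else 0) +
  (if k = negIdx s δ then w * (tFun s Θ δ)⁻¹ else 0)

lemma M_add_N (s : ℕ) (α : Fin (s + 1) → ℂ) (Θ : Fin (s + 1) → Fin (s + 1) → ℝ) :
    Mblk s α Θ + Nblk s α Θ =
      Amat s (fun a => α a.succ) (fun b a => Θ b.succ a.succ) *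
        Qblk s Θ (Complex.exp ((Real.pi : ℂ) * Complex.I / 2 * α 0))
                 (Complex.exp ((Real.pi : ℂ) * Complex.I / 2 * (- α 0))) := by
  ext i d
  simp only [Matrix.add_apply, Matrix.mul_apply, Mblk, Nblk, Qblk, mul_add,
    mul_ite, mul_zero, Finset.sum_add_distrib, Finset.sum_ite_eq',
    Finset.mem_univ, if_true]
  ring

lemma M_sub_N (s : ℕ) (α : Fin (s + 1) → ℂ) (Θ : Fin (s + 1) → Fin (s + 1) → ℝ) :
    Mblk s α Θ - Nblk s α Θ =
      Amat s (fun a => α a.succ) (fun b a => Θ b.succ a.succ) *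
        Qblk s Θ (Complex.exp ((Real.pi : ℂ) * Complex.I / 2 * α 0))
                 (- Complex.exp ((Real.pi : ℂ) * Complex.I / 2 * (- α 0))) := by
  ext i d
  simp only [Matrix.sub_apply, Matrix.mul_apply, Mblk, Nblk, Qblk, mul_add,
    mul_ite, mul_zero, Finset.sum_add_distrib, Finset.sum_ite_eq',
    Finset.mem_univ, if_true]
  ring

/-- The equivalence `n ⊕ n ≃ Fin 2 × n`. -/
def pairEquiv (n : Type*) : n ⊕ n ≃ Fin 2 × n where
  toFun x := match x with | .inl i => ((0 : Fin 2), i) | .inr i => ((1 : Fin 2), i)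
  invFun p := if p.1 = 0 then .inl p.2 else .inr p.2
  left_inv x := by cases x <;> simp
  right_inv p := by rcases p with ⟨u, i⟩; fin_cases u <;> simp

lemma det_fromBlocks_diagonal {n : Type*} [Fintype n] [DecidableEq n] (a b c d : n → ℂ) :
    (Matrix.fromBlocks (Matrix.diagonal a) (Matrix.diagonal b)
      (Matrix.diagonal c) (Matrix.diagonal d)).det = ∏ i, (a i * d i - b i * c i) := by
  have key : Matrix.fromBlocks (Matrix.diagonal a) (Matrix.diagonal b)
      (Matrix.diagonal c) (Matrix.diagonal d) =
      (Matrix.blockDiagonal fun i => !![a i, b i; c i, d i]).submatrix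
        (pairEquiv n) (pairEquiv n) := by
    ext x y
    cases x <;> cases y <;>
      simp [pairEquiv, Matrix.blockDiagonal_apply, Matrix.diagonal_apply,
        Matrix.fromBlocks]
  rw [key, Matrix.det_submatrix_equiv_self, Matrix.det_blockDiagonal]
  exact Finset.prod_congr rfl fun i _ => by rw [Matrix.det_fin_two_of]

lemma det_fromBlocks_swap {n : Type*} [Fintype n] [DecidableEq n]
    (M N : Matrix n n ℂ) :
    (Matrix.fromBlocks M N N M).det = (M + N).det * (M - N).det := by
  have h : Matrix.fromBlocks M N N M =
      Matrix.fromBlocks 1 0 1 1 * Matrix.fromBlocks (M + N) N 0 (M - N) *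
        Matrix.fromBlocks 1 0 (-1) 1 := by
    simp only [Matrix.fromBlocks_multiply, Matrix.one_mul, Matrix.mul_one,
      Matrix.zero_mul, Matrix.mul_zero, add_zero, zero_add, Matrix.mul_neg,
      Matrix.neg_mul]
    rw [Matrix.fromBlocks_inj]
    refine ⟨by abel, by abel, by abel, by abel⟩
  rw [h, Matrix.det_mul, Matrix.det_mul, Matrix.det_fromBlocks_zero₂₁,
    Matrix.det_fromBlocks_zero₁₂, Matrix.det_fromBlocks_zero₁₂, Matrix.det_one]
  ring

lemma Qblk_succ (u : ℕ) (Θ : Fin (u + 2) → Fin (u + 2) → ℝ) (z w : ℂ) :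
    (Qblk (u + 1) Θ z w).submatrix (esum u) (esum u) =
      Matrix.fromBlocks
        (Matrix.diagonal fun d => z * tFun (u + 1) Θ (esum u (Sum.inl d)))
        (Matrix.diagonal fun d => w * (tFun (u + 1) Θ (esum u (Sum.inr d)))⁻¹)
        (Matrix.diagonal fun d => w * (tFun (u + 1) Θ (esum u (Sum.inl d)))⁻¹)
        (Matrix.diagonal fun d => z * tFun (u + 1) Θ (esum u (Sum.inr d))) := by
  ext x y
  cases x with
  | inl k =>
    cases y with
    | inl d =>
      by_cases h : k = d
      · subst h; simp [Qblk, negIdx_esum_inl, Matrix.diagonal_apply]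
      · simp [Qblk, negIdx_esum_inl, Matrix.diagonal_apply, h]
    | inr d =>
      by_cases h : k = d
      · subst h; simp [Qblk, negIdx_esum_inr, Matrix.diagonal_apply]
      · simp [Qblk, negIdx_esum_inr, Matrix.diagonal_apply, h]
  | inr k =>
    cases y with
    | inl d =>
      by_cases h : k = d
      · subst h; simp [Qblk, negIdx_esum_inl, Matrix.diagonal_apply]
      · simp [Qblk, negIdx_esum_inl, Matrix.diagonal_apply, h]
    | inr d =>
      by_cases h : k = d
      · subst h; simp [Qblk, negIdx_esum_inr, Matrix.diagonal_apply]
      · simp [Qblk, negIdx_esum_inr, Matrix.diagonal_apply, h]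

lemma det_Qblk_mul (s : ℕ) (Θ : Fin (s + 1) → Fin (s + 1) → ℝ) (z w : ℂ) :
    (Qblk s Θ z w).det * (Qblk s Θ z (-w)).det = (z ^ 2 - w ^ 2) ^ 2 ^ s := by
  cases s with
  | zero =>
    have e : Fin 1 ≃ Fin (2 ^ 0) := finCongr (by norm_num)
    rw [← Matrix.det_submatrix_equiv_self e (Qblk 0 Θ z w),
      ← Matrix.det_submatrix_equiv_self e (Qblk 0 Θ z (-w)),
      Matrix.det_fin_one, Matrix.det_fin_one]
    simp only [Matrix.submatrix_apply, Qblk, negIdx, tFun]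
    simp only [if_true, Finset.univ_eq_empty, Finset.sum_empty, mul_zero,
      Complex.exp_zero, mul_one, inv_one]
    norm_num
    ring
  | succ u =>
    rw [← Matrix.det_submatrix_equiv_self (esum u) (Qblk (u + 1) Θ z w),
      ← Matrix.det_submatrix_equiv_self (esum u) (Qblk (u + 1) Θ z (-w)),
      Qblk_succ, Qblk_succ, det_fromBlocks_diagonal, det_fromBlocks_diagonal,
      ← Finset.prod_mul_distrib]
    have step : ∀ d : Fin (2 ^ u),
        (z * tFun (u + 1) Θ (esum u (Sum.inl d)) *
            (z * tFun (u + 1) Θ (esum u (Sum.inr d))) -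
          w * (tFun (u + 1) Θ (esum u (Sum.inr d)))⁻¹ *
            (w * (tFun (u + 1) Θ (esum u (Sum.inl d)))⁻¹)) *
        (z * tFun (u + 1) Θ (esum u (Sum.inl d)) *
            (z * tFun (u + 1) Θ (esum u (Sum.inr d))) -
          -w * (tFun (u + 1) Θ (esum u (Sum.inr d)))⁻¹ *
            (-w * (tFun (u + 1) Θ (esum u (Sum.inl d)))⁻¹)) =
        (z ^ 2 - w ^ 2) ^ 2 := by
      intro d
      have tr : tFun (u + 1) Θ (esum u (Sum.inr d)) =
          (tFun (u + 1) Θ (esum u (Sum.inl d)))⁻¹ := by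
        rw [← negIdx_esum_inl, tFun_negIdx]
      have ht : tFun (u + 1) Θ (esum u (Sum.inl d)) ≠ 0 := tFun_ne_zero _ _ _
      rw [tr]
      field_simp
    calc (∏ d : Fin (2 ^ u), _) = ∏ _d : Fin (2 ^ u), (z ^ 2 - w ^ 2) ^ 2 :=
          Finset.prod_congr rfl fun d _ => step d
      _ = ((z ^ 2 - w ^ 2) ^ 2) ^ 2 ^ u := by
          rw [Finset.prod_const, Finset.card_univ, Fintype.card_fin]
      _ = (z ^ 2 - w ^ 2) ^ 2 ^ (u + 1) := by
          rw [← pow_mul, ← pow_succ']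

lemma det_Amat_zero (α : Fin 0 → ℂ) (Θ : Fin 0 → Fin 0 → ℝ) :
    (Amat 0 α Θ).det = 1 := by
  have e : Fin 1 ≃ Fin (2 ^ 0) := finCongr (by norm_num)
  rw [← Matrix.det_submatrix_equiv_self e, Matrix.det_fin_one]
  simp [Amat]

lemma det_Amat_succ (s : ℕ) (α : Fin (s + 1) → ℂ) (Θ : Fin (s + 1) → Fin (s + 1) → ℝ) :
    (Amat (s + 1) α Θ).det =
      (Amat s (fun a => α a.succ) (fun b a => Θ b.succ a.succ)).det ^ 2 *
        (2 * Complex.I * Complex.sin (Real.pi * α 0)) ^ 2 ^ s := by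
  have hxy : Complex.exp ((Real.pi : ℂ) * Complex.I / 2 * α 0) ^ 2 -
      Complex.exp ((Real.pi : ℂ) * Complex.I / 2 * (- α 0)) ^ 2 =
      2 * Complex.I * Complex.sin (Real.pi * α 0) := by
    rw [sq, sq, ← Complex.exp_add, ← Complex.exp_add, Complex.sin]
    rw [show (Real.pi : ℂ) * Complex.I / 2 * α 0 + (Real.pi : ℂ) * Complex.I / 2 * α 0 =
      (Real.pi : ℂ) * α 0 * Complex.I from by ring]
    rw [show (Real.pi : ℂ) * Complex.I / 2 * (- α 0) + (Real.pi : ℂ) * Complex.I / 2 * (- α 0) =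
      -((Real.pi : ℂ) * α 0 * Complex.I) from by ring]
    have hI : Complex.I * Complex.I = -1 := Complex.I_mul_I
    field_simp
    ring_nf
    simp only [Complex.I_sq]
    ring
  rw [← Matrix.det_submatrix_equiv_self (esum s) (Amat (s + 1) α Θ), Amat_succ_eq,
    det_fromBlocks_swap, M_add_N, M_sub_N, Matrix.det_mul, Matrix.det_mul]
  rw [show ∀ A q1 q2 : ℂ, A * q1 * (A * q2) = A ^ 2 * (q1 * q2) from fun _ _ _ => by ring]
  rw [det_Qblk_mul, hxy]

lemma det_Amat (s : ℕ) (hs : 1 ≤ s) (α : Fin s → ℂ) (Θ : Fin s → Fin s → ℝ) :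
    (Amat s α Θ).det =
      ∏ j, (2 * Complex.I * Complex.sin (Real.pi * α j)) ^ 2 ^ (s - 1) := by
  induction s with
  | zero => omega
  | succ u ih =>
    rw [det_Amat_succ]
    rcases Nat.eq_zero_or_pos u with hu | hu
    · subst hu
      rw [det_Amat_zero]
      simp [Fin.prod_univ_succ]
    · rw [ih hu]
      rw [Fin.prod_univ_succ]
      rw [← Finset.prod_pow]
      have h2 : ∀ X : ℂ, (X ^ 2 ^ (u - 1)) ^ 2 = X ^ 2 ^ u := by
        intro X
        rw [← pow_mul]
        congr 1
        rw [← pow_succ]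
        congr 1
        omega
      have hs : u + 1 - 1 = u := rfl
      rw [hs]
      rw [Finset.prod_congr rfl fun (j : Fin u) _ => h2 _]
      ring

end Aux

/-- for `r ≥ 2`, `det A_r(α;Θ) = Π_{j=1}^r (2 sin πα_j)^(2^(r-1))`
(in particular independent of `Θ`), and consequently
`det Ã_r(α;Θ) = (Γ(α)/(2π)^{|α|})^(2^r) · (Π_{j=1}^r 2 sin πα_j)^(2^(r-1))`,
where `Ã_r(α;Θ) = (Γ(α)/(2π)^{|α|}) · A_r(α;Θ)`. -/
theorem statement8 (r : ℕ) (hr : 2 ≤ r) (α : Fin r → ℂ) (Θ : Fin r → Fin r → ℝ) :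
    (Amat r α Θ).det = (∏ j, (2 * Complex.sin (Real.pi * α j)) ^ 2 ^ (r - 1)) ∧
    (((∏ j, Complex.Gamma (α j)) / (2 * Real.pi : ℂ) ^ (∑ j, α j)) • Amat r α Θ).det =
      ((∏ j, Complex.Gamma (α j)) / (2 * Real.pi : ℂ) ^ (∑ j, α j)) ^ 2 ^ r *
        (∏ j, 2 * Complex.sin (Real.pi * α j)) ^ 2 ^ (r - 1) := by
  have h1 : (Amat r α Θ).det = ∏ j, (2 * Complex.sin (Real.pi * α j)) ^ 2 ^ (r - 1) := by
    rw [det_Amat r (by omega)]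
    have hstep : ∀ j : Fin r,
        (2 * Complex.I * Complex.sin (Real.pi * α j)) ^ 2 ^ (r - 1) =
          Complex.I ^ 2 ^ (r - 1) * (2 * Complex.sin (Real.pi * α j)) ^ 2 ^ (r - 1) :=
      fun j => by
        rw [show (2 * Complex.I * Complex.sin (Real.pi * α j)) =
          Complex.I * (2 * Complex.sin (Real.pi * α j)) from by ring, mul_pow]
    rw [Finset.prod_congr rfl fun j _ => hstep j, Finset.prod_mul_distrib,
      Finset.prod_const, Finset.card_univ, Fintype.card_fin, ← pow_mul]
    have hdvd : 4 ∣ 2 ^ (r - 1) * r := by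
      rcases Nat.lt_or_ge r 3 with h | h
      · have hr2 : r = 2 := by omega
        subst hr2; norm_num
      · have h4 : (4 : ℕ) = 2 ^ 2 := by norm_num
        exact Dvd.dvd.mul_right (h4 ▸ pow_dvd_pow 2 (by omega)) r
    obtain ⟨k, hk⟩ := hdvd
    have hI4 : Complex.I ^ 4 = 1 := by
      rw [show (4 : ℕ) = 2 * 2 from rfl, pow_mul, Complex.I_sq]
      norm_num
    rw [hk, pow_mul, hI4, one_pow, one_mul]
  refine ⟨h1, ?_⟩
  rw [Matrix.det_smul, h1, Fintype.card_fin, Finset.prod_pow]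

end HomCone
end
end

section
/- Let r ≥ 1 and α ∈ ℂ^r. Let M(α) be the matrix with rows and columns indexed by {1,-1}^r whose (ε,δ) entry is exp((π√-1/2) · Σ_{j=1}^r ε_j δ_j α_j), and for a ∈ {0,1}^r let k_a be the vector indexed by {1,-1}^r with ε-entry Π_{j=1}^r ε_j^{a_j}. Then M(α) · k_a = 2^r · (√-1)^{|a|} · (Π_{j=1}^r c(α_j - a_j)) · k_a, where |a| = a₁ + ⋯ + a_r; moreover, the 2^r vectors k_a (a ∈ {0,1}^r) are pairwise orthogonal, so they form an eigenbasis diagonalizing M(α). -/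
/-!
Common definitions for zeta functions associated with homogeneous cones
(following Nakashima, "Functional equations of zeta functions associated
with homogeneous cones"): the functions `c(z) = cos (π z / 2)`,
`s(z) = sin (π z / 2)`, the recursive ordering of the sign set
`I_r = {1,-1}^r`, the Hadamard matrices `J^(r)`, the gamma-matrix
`A_r(α; Θ)`, the matrices `C_r`, `S_r`, the diagonal matrices `D_j^(r)(α)`,
and the rotation matrices `P_{kj}^(r)(θ) = c(θ)·I + s(θ)·X_{kj}^(r)`.
Matrices indexed by `I_s` are identified with `2^s × 2^s` matrices via the
recursive ordering, which is encoded by `ord s : Fin (2^s) → (Fin s → ℤ)`,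
sending a position to the corresponding sign vector.
-/

noncomputable section
open Matrix Complex

namespace HomCone

/-- The matrix `M(α)` with rows and columns indexed by `{1,-1}^r`, whose
`(ε, δ)` entry is `exp((π√-1/2) Σ_j ε_j δ_j α_j)`. -/
def Mmat (r : ℕ) (α : Fin r → ℂ) :
    Matrix (Fin r → ({1, -1} : Finset ℤ)) (Fin r → ({1, -1} : Finset ℤ)) ℂ :=
  fun ε δ => Complex.exp (Real.pi * Complex.I / 2 *
    ∑ j, ((ε j : ℤ) : ℂ) * ((δ j : ℤ) : ℂ) * α j)

/-- The vector `k_a` indexed by `{1,-1}^r` with `ε`-entry `Π_j ε_j^{a_j}`. -/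
def kvec (r : ℕ) (a : Fin r → Fin 2) : (Fin r → ({1, -1} : Finset ℤ)) → ℂ :=
  fun ε => ∏ j, ((ε j : ℤ) : ℂ) ^ ((a j : ℕ))


lemma sum_pm (f : ℤ → ℂ) : ∑ x : ({1, -1} : Finset ℤ), f (x : ℤ) = f 1 + f (-1) := by
  rw [Finset.sum_coe_sort ({1,-1} : Finset ℤ) f,
    show ({1,-1} : Finset ℤ) = insert 1 {-1} from rfl,
    Finset.sum_insert (by decide), Finset.sum_singleton]

lemma coord (a : Fin 2) (z : ℂ) (e : ℤ) (he : e = 1 ∨ e = -1) :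
    ∑ x : ({1, -1} : Finset ℤ),
      Complex.exp ((Real.pi : ℂ) * Complex.I / 2 * ((e : ℂ) * ((x : ℤ) : ℂ) * z)) * ((x : ℤ) : ℂ) ^ ((a : ℕ)) =
    2 * Complex.I ^ ((a : ℕ)) * cc (z - ((a : ℕ) : ℂ)) * (e : ℂ) ^ ((a : ℕ)) := by
  rw [sum_pm (fun y => Complex.exp ((Real.pi : ℂ) * Complex.I / 2 * ((e : ℂ) * (y : ℂ) * z)) * (y : ℂ) ^ ((a : ℕ)))]
  have h1 : (Real.pi : ℂ) * Complex.I / 2 * ((e:ℂ) * ((1:ℤ):ℂ) * z) = ((e:ℂ) * ((Real.pi:ℂ) * z / 2)) * Complex.I := by push_cast; ring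
  have h2 : (Real.pi : ℂ) * Complex.I / 2 * ((e:ℂ) * ((-1:ℤ):ℂ) * z) = (-((e:ℂ) * ((Real.pi:ℂ) * z / 2))) * Complex.I := by push_cast; ring
  rw [h1, h2, Complex.exp_mul_I, Complex.exp_mul_I]
  have hs : cc (z - 1) = Complex.sin ((Real.pi:ℂ) * z / 2) := by
    unfold cc
    rw [show (Real.pi:ℂ) * (z - 1) / 2 = (Real.pi:ℂ)*z/2 - (Real.pi:ℂ)/2 by ring,
      Complex.cos_sub_pi_div_two]
  have hc : cc z = Complex.cos ((Real.pi:ℂ) * z / 2) := rfl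
  fin_cases a <;> rcases he with rfl | rfl <;>
    simp [sub_zero, hs, hc, Complex.cos_neg, Complex.sin_neg] <;> ring

lemma mem_pm (x : ({1, -1} : Finset ℤ)) : (x : ℤ) = 1 ∨ (x : ℤ) = -1 := by
  have h := x.2
  rw [Finset.mem_insert, Finset.mem_singleton] at h
  exact h

/-- each `k_a` (`a ∈ {0,1}^r`) is an eigenvector of `M(α)` with
eigenvalue `2^r (√-1)^{|a|} Π_j c(α_j - a_j)`, and the `2^r` vectors `k_a`
are pairwise orthogonal; hence they form an eigenbasis diagonalizing `M(α)`. -/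
theorem statement14 (r : ℕ) (hr : 1 ≤ r) (α : Fin r → ℂ) :
    (∀ a : Fin r → Fin 2,
      (Mmat r α).mulVec (kvec r a) =
        ((2 : ℂ) ^ r * Complex.I ^ (∑ j, ((a j : ℕ))) *
          ∏ j, cc (α j - ((a j : ℕ) : ℂ))) • kvec r a) ∧
    Pairwise fun a a' : Fin r → Fin 2 => kvec r a ⬝ᵥ kvec r a' = 0 := by
  constructor
  · intro a
    funext ε
    have step : ∀ δ : Fin r → ({1, -1} : Finset ℤ),
        Mmat r α ε δ * kvec r a δ =
        ∏ j, (Complex.exp ((Real.pi : ℂ) * Complex.I / 2 *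
            (((ε j : ℤ) : ℂ) * ((δ j : ℤ) : ℂ) * α j)) * ((δ j : ℤ) : ℂ) ^ ((a j : ℕ))) := by
      intro δ
      unfold Mmat kvec
      rw [Finset.mul_sum, Complex.exp_sum, ← Finset.prod_mul_distrib]
    simp only [Matrix.mulVec, dotProduct]
    rw [Finset.sum_congr rfl (fun δ _ => step δ),
      ← Fintype.prod_sum (fun j (x : ({1, -1} : Finset ℤ)) =>
        Complex.exp ((Real.pi : ℂ) * Complex.I / 2 *
          (((ε j : ℤ) : ℂ) * ((x : ℤ) : ℂ) * α j)) * ((x : ℤ) : ℂ) ^ ((a j : ℕ)))]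
    rw [Finset.prod_congr rfl (fun j _ => coord (a j) (α j) (ε j) (mem_pm (ε j)))]
    rw [Finset.prod_mul_distrib, Finset.prod_mul_distrib, Finset.prod_mul_distrib,
      Finset.prod_const, Finset.prod_pow_eq_pow_sum]
    simp [kvec, Finset.card_univ]
  · intro a a' h
    have hne : ∃ j, a j ≠ a' j := Function.ne_iff.mp h
    obtain ⟨j, hj⟩ := hne
    unfold dotProduct kvec
    have step : ∀ ε : Fin r → ({1, -1} : Finset ℤ),
        (∏ i, ((ε i : ℤ) : ℂ) ^ ((a i : ℕ))) * ∏ i, ((ε i : ℤ) : ℂ) ^ ((a' i : ℕ)) =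
        ∏ i, (((ε i : ℤ) : ℂ) ^ ((a i : ℕ)) * ((ε i : ℤ) : ℂ) ^ ((a' i : ℕ))) := by
      intro ε; rw [← Finset.prod_mul_distrib]
    rw [Finset.sum_congr rfl (fun ε _ => step ε),
      ← Fintype.prod_sum (fun i (x : ({1, -1} : Finset ℤ)) =>
        ((x : ℤ) : ℂ) ^ ((a i : ℕ)) * ((x : ℤ) : ℂ) ^ ((a' i : ℕ)))]
    apply Finset.prod_eq_zero (Finset.mem_univ j)
    rw [sum_pm (fun y : ℤ => (y : ℂ) ^ ((a j : ℕ)) * (y : ℂ) ^ ((a' j : ℕ)))]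
    have hmn : (a j : ℕ) + (a' j : ℕ) = 1 := by
      have h1 := (a j).isLt
      have h2 := (a' j).isLt
      have h3 : (a j : ℕ) ≠ (a' j : ℕ) := Fin.val_ne_of_ne hj
      omega
    push_cast
    rw [← pow_add, ← pow_add, hmn]
    simp


end HomCone
end
end

section
/- Let a ∈ {0,1} and let z ∈ ℂ be such that z is not a nonpositive integer and (1-z+a)/2 is not a nonpositive integer. Then Γ(z) · cos(π(z-a)/2) = (2^z · √π / 2) · Γ((z+a)/2) / Γ((1-z+a)/2). -/
/-!
Common definitions for zeta functions associated with homogeneous cones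
(following Nakashima, "Functional equations of zeta functions associated
with homogeneous cones"): the functions `c(z) = cos (π z / 2)`,
`s(z) = sin (π z / 2)`, the recursive ordering of the sign set
`I_r = {1,-1}^r`, the Hadamard matrices `J^(r)`, the gamma-matrix
`A_r(α; Θ)`, the matrices `C_r`, `S_r`, the diagonal matrices `D_j^(r)(α)`,
and the rotation matrices `P_{kj}^(r)(θ) = c(θ)·I + s(θ)·X_{kj}^(r)`.
Matrices indexed by `I_s` are identified with `2^s × 2^s` matrices via the
recursive ordering, which is encoded by `ord s : Fin (2^s) → (Fin s → ℤ)`,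
sending a position to the corresponding sign vector.
-/

noncomputable section
open Matrix Complex

namespace HomCone

/-- for `a ∈ {0,1}` and `z ∈ ℂ` such that `z` is not a
nonpositive integer and `(1-z+a)/2` is not a nonpositive integer,
`Γ(z) cos(π(z-a)/2) = (2^z √π / 2) · Γ((z+a)/2) / Γ((1-z+a)/2)`. -/
theorem statement15 (a : ℕ) (ha : a = 0 ∨ a = 1) (z : ℂ)
    (hz : ∀ n : ℕ, z ≠ -(n : ℂ)) (hz' : ∀ n : ℕ, (1 - z + (a : ℂ)) / 2 ≠ -(n : ℂ)) :
    Complex.Gamma z * Complex.cos (Real.pi * (z - (a : ℂ)) / 2) =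
      (2 : ℂ) ^ z * (Real.sqrt Real.pi : ℂ) / 2 *
        Complex.Gamma ((z + (a : ℂ)) / 2) / Complex.Gamma ((1 - z + (a : ℂ)) / 2) := by
  have hπ : (Real.pi : ℂ) ≠ 0 := Complex.ofReal_ne_zero.mpr Real.pi_ne_zero
  have hs : ((Real.sqrt Real.pi : ℝ) : ℂ) ≠ 0 := by
    simp [Real.sqrt_eq_zero', Real.pi_ne_zero, Real.pi_pos.not_ge]
  have hss : ((Real.sqrt Real.pi : ℝ) : ℂ) * ((Real.sqrt Real.pi : ℝ) : ℂ) = (Real.pi : ℂ) := by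
    rw [← Complex.ofReal_mul, Real.mul_self_sqrt Real.pi_pos.le]
  have hu : (2 : ℂ) ^ (1 - z) ≠ 0 := by
    simp [Complex.cpow_eq_zero_iff]
  have h2 : (2 : ℂ) ^ (1 - z) * (2 : ℂ) ^ z = 2 := by
    rw [← Complex.cpow_add _ _ (by norm_num : (2:ℂ) ≠ 0)]
    norm_num
  have hdup := Complex.Gamma_mul_Gamma_add_half (z / 2)
  rw [show 2 * (z / 2) = z by ring] at hdup
  have hne : (2 : ℂ) ^ (1 - z) * ((Real.sqrt Real.pi : ℝ) : ℂ) ≠ 0 := mul_ne_zero hu hs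
  rcases ha with rfl | rfl
  · simp only [Nat.cast_zero, sub_zero, add_zero] at hz' ⊢
    have hC : Complex.Gamma ((1 - z) / 2) ≠ 0 := Complex.Gamma_ne_zero hz'
    have hsin : Complex.sin ((Real.pi : ℂ) * (z/2 + 1/2)) ≠ 0 := by
      intro h
      obtain ⟨k, hk⟩ := Complex.sin_eq_zero_iff.mp h
      have h1 : (Real.pi:ℂ) * (z/2 + 1/2) = (Real.pi:ℂ) * (k:ℂ) := by rw [hk]; ring
      have hzk : z = 2*(k:ℂ) - 1 := by linear_combination 2 * mul_left_cancel₀ hπ h1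
      by_cases hk0 : 0 < k
      · have hc : (((k-1).toNat : ℕ) : ℂ) = (k:ℂ) - 1 := by
          have : (((k-1).toNat : ℕ) : ℤ) = k - 1 := Int.toNat_of_nonneg (by omega)
          exact_mod_cast congrArg (fun t : ℤ => (t : ℂ)) this
        exact hz' (k-1).toNat (by rw [hzk, hc]; ring)
      · have hc : (((1-2*k).toNat : ℕ) : ℂ) = 1 - 2*(k:ℂ) := by
          have : (((1-2*k).toNat : ℕ) : ℤ) = 1 - 2*k := Int.toNat_of_nonneg (by omega)
          exact_mod_cast congrArg (fun t : ℤ => (t : ℂ)) this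
        exact hz (1-2*k).toNat (by rw [hzk, hc]; ring)
    have hrefl := Complex.Gamma_mul_Gamma_one_sub (z/2 + 1/2)
    rw [show (1 : ℂ) - (z/2 + 1/2) = (1 - z)/2 by ring] at hrefl
    have key : Complex.Gamma (z/2 + 1/2) * Complex.Gamma ((1-z)/2) *
        Complex.sin ((Real.pi : ℂ) * (z/2 + 1/2)) = (Real.pi : ℂ) := by
      rw [hrefl, div_mul_cancel₀ _ hsin]
    have htrig : Complex.sin ((Real.pi : ℂ) * (z/2 + 1/2)) =
        Complex.cos ((Real.pi : ℂ) * z / 2) := by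
      rw [show (Real.pi:ℂ) * (z/2 + 1/2) = (Real.pi:ℂ)/2 + (Real.pi:ℂ) * z / 2 by ring,
        Complex.sin_add, Complex.sin_pi_div_two, Complex.cos_pi_div_two]
      ring
    rw [htrig] at key
    rw [eq_div_iff hC]
    apply mul_right_cancel₀ hne
    linear_combination (-(Complex.cos ((Real.pi : ℂ) * z / 2) * Complex.Gamma ((1-z)/2))) * hdup
      + Complex.Gamma (z/2) * key + (-(Complex.Gamma (z/2))) * hss
      + (-(Complex.Gamma (z/2) * ((Real.sqrt Real.pi : ℝ) : ℂ) * ((Real.sqrt Real.pi : ℝ) : ℂ))/2) * h2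
  · simp only [Nat.cast_one] at hz' ⊢
    rw [show (z + 1)/2 = z/2 + 1/2 by ring, show ((1:ℂ) - z + 1)/2 = 1 - z/2 by ring]
    have hz'' : ∀ n : ℕ, (1 : ℂ) - z/2 ≠ -(n : ℂ) := by
      intro n h
      exact hz' n (by rw [show ((1:ℂ) - z + 1)/2 = 1 - z/2 by ring, h])
    have hC : Complex.Gamma (1 - z/2) ≠ 0 := Complex.Gamma_ne_zero hz''
    have hsin : Complex.sin ((Real.pi : ℂ) * (z/2)) ≠ 0 := by
      intro h
      obtain ⟨k, hk⟩ := Complex.sin_eq_zero_iff.mp h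
      have h1 : (Real.pi:ℂ) * (z/2) = (Real.pi:ℂ) * (k:ℂ) := by rw [hk]; ring
      have hzk : z = 2*(k:ℂ) := by linear_combination 2 * mul_left_cancel₀ hπ h1
      by_cases hk0 : 0 < k
      · have hc : (((k-1).toNat : ℕ) : ℂ) = (k:ℂ) - 1 := by
          have : (((k-1).toNat : ℕ) : ℤ) = k - 1 := Int.toNat_of_nonneg (by omega)
          exact_mod_cast congrArg (fun t : ℤ => (t : ℂ)) this
        exact hz'' (k-1).toNat (by rw [hzk, hc]; ring)
      · have hc : ((((-k).toNat) : ℕ) : ℂ) = -(k:ℂ) := by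
          have : ((((-k).toNat) : ℕ) : ℤ) = -k := Int.toNat_of_nonneg (by omega)
          exact_mod_cast congrArg (fun t : ℤ => (t : ℂ)) this
        exact hz (2*(-k).toNat) (by rw [hzk]; push_cast [hc]; ring)
    have hrefl := Complex.Gamma_mul_Gamma_one_sub (z/2)
    have key : Complex.Gamma (z/2) * Complex.Gamma (1 - z/2) *
        Complex.sin ((Real.pi : ℂ) * (z/2)) = (Real.pi : ℂ) := by
      rw [hrefl, div_mul_cancel₀ _ hsin]
    have htrig : Complex.cos ((Real.pi : ℂ) * (z - 1) / 2) =
        Complex.sin ((Real.pi : ℂ) * (z/2)) := by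
      rw [show (Real.pi:ℂ) * (z - 1) / 2 = (Real.pi:ℂ) * (z/2) - (Real.pi:ℂ)/2 by ring,
        Complex.cos_sub, Complex.sin_pi_div_two, Complex.cos_pi_div_two]
      ring
    rw [htrig, eq_div_iff hC]
    apply mul_right_cancel₀ hne
    linear_combination (-(Complex.sin ((Real.pi : ℂ) * (z/2)) * Complex.Gamma (1 - z/2))) * hdup
      + Complex.Gamma (z/2 + 1/2) * key + (-(Complex.Gamma (z/2 + 1/2))) * hss
      + (-(Complex.Gamma (z/2 + 1/2) * ((Real.sqrt Real.pi : ℝ) : ℂ) * ((Real.sqrt Real.pi : ℝ) : ℂ))/2) * h2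


end HomCone
end
end
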